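/- arXiv:1602.00875 — 5 statements merged into one kernel-verified Lean document; each statement's English description precedes it below -/
import Mathlib

section
/- Let P and Q be probability mass functions on a common finite alphabet X, let W(y|x) be a channel from X to {0,1}, and suppose d_TV(P,Q) ≤ δ with δ ≤ 1. Then the mutual informations satisfy |I_P(X;Y) - I_Q(X;Y)| ≤ δ log(4/δ), where I_P(X;Y) is the mutual information when X has distribution P and Y is obtained by passing X through W. -/
open Real Finset

private lemma nml_le_half {x : ℝ} (h0 : 0 ≤ x) (h1 : x ≤ 1) :
    Real.negMulLog x ≤ (1 - x^2) / 2 := by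
  rcases eq_or_lt_of_le h0 with h | hx
  · simp [← h, Real.negMulLog]
  · have hy : 0 ≤ -Real.log x := by simpa using Real.log_nonpos h0 h1
    have hs : -Real.log x ≤ Real.sinh (-Real.log x) := by
      rcases eq_or_lt_of_le hy with h | h
      · rw [← h]; simp
      · exact (Real.self_lt_sinh_iff.mpr h).le
    rw [Real.sinh_eq, neg_neg, Real.exp_log hx, Real.exp_neg, Real.exp_log hx] at hs
    -- hs : -log x ≤ (x⁻¹ - x)/2
    have hinv : x * x⁻¹ = 1 := mul_inv_cancel₀ (ne_of_gt hx)
    simp only [Real.negMulLog, neg_mul]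
    nlinarith [mul_le_mul_of_nonneg_left hs h0]

private lemma nml_mono {x y : ℝ} (h0 : 0 ≤ x) (hxy : x ≤ y) (h1 : y ≤ 1) :
    Real.negMulLog x - Real.negMulLog y ≤ y - x := by
  rcases eq_or_lt_of_le h0 with h | hx
  · rw [← h]
    simp only [Real.negMulLog_zero, zero_sub, neg_le_sub_iff_le_add]
    have := Real.negMulLog_nonneg (le_trans h0 hxy) h1
    linarith
  · have hy : 0 < y := lt_of_lt_of_le hx hxy
    have h1' : Real.log (y / x) ≤ y / x - 1 := Real.log_le_sub_one_of_pos (by positivity)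
    rw [Real.log_div (ne_of_gt hy) (ne_of_gt hx)] at h1'
    have h2 : (y - x) * Real.log y ≤ 0 :=
      mul_nonpos_of_nonneg_of_nonpos (by linarith) (Real.log_nonpos hy.le h1)
    have h3 : x * (Real.log y - Real.log x) ≤ x * (y / x - 1) :=
      mul_le_mul_of_nonneg_left h1' hx.le
    have h4 : x * (y / x - 1) = y - x := by field_simp
    simp only [Real.negMulLog, neg_mul]
    nlinarith

private lemma nml_subadd {x y : ℝ} (h0 : 0 ≤ x) (h1 : 0 ≤ y) :
    Real.negMulLog (x + y) ≤ Real.negMulLog x + Real.negMulLog y := by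
  rcases eq_or_lt_of_le h0 with h | hx
  · simp [← h]
  rcases eq_or_lt_of_le h1 with h | hy
  · simp [← h]
  have hxs : Real.log x ≤ Real.log (x + y) := Real.log_le_log hx (by linarith)
  have hys : Real.log y ≤ Real.log (x + y) := Real.log_le_log hy (by linarith)
  simp only [Real.negMulLog, neg_mul, add_mul]
  nlinarith

private lemma hdiff {a b : ℝ} (ha0 : 0 ≤ a) (ha1 : a ≤ 1) (hb0 : 0 ≤ b) (hb1 : b ≤ 1) :
    (Real.negMulLog a + Real.negMulLog (1 - a)) - (Real.negMulLog b + Real.negMulLog (1 - b))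
      ≤ Real.negMulLog |a - b| + |a - b| := by
  rcases le_total b a with h | h
  · rw [abs_of_nonneg (by linarith)]
    have h1 : Real.negMulLog a ≤ Real.negMulLog b + Real.negMulLog (a - b) := by
      have := nml_subadd hb0 (show (0:ℝ) ≤ a - b by linarith)
      simpa [show b + (a - b) = a by ring] using this
    have h2 : Real.negMulLog (1 - a) - Real.negMulLog (1 - b) ≤ (1 - b) - (1 - a) :=
      nml_mono (by linarith) (by linarith) (by linarith)
    linarith
  · rw [abs_of_nonpos (by linarith), neg_sub]
    have h1 : Real.negMulLog (1 - a) ≤ Real.negMulLog (1 - b) + Real.negMulLog (b - a) := by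
      have := nml_subadd (show (0:ℝ) ≤ 1 - b by linarith) (show (0:ℝ) ≤ b - a by linarith)
      simpa [show (1 - b) + (b - a) = 1 - a by ring] using this
    have h2 : Real.negMulLog a - Real.negMulLog b ≤ b - a :=
      nml_mono ha0 h (by linarith)
    linarith

private lemma binent_le {p : ℝ} : Real.negMulLog p + Real.negMulLog (1 - p) ≤ Real.log 2 := by
  have := Real.binEntropy_le_log_two (p := p)
  rwa [Real.binEntropy_eq_negMulLog_add_negMulLog_one_sub] at this

private lemma theta_fact {m : ℝ} (hm : 1/2 ≤ m) (hm1 : m ≤ 1) :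
    m + 2 * Real.negMulLog m + Real.negMulLog (1 - m) ≤ (3 - m) * Real.log 2 := by
  have h1 : Real.negMulLog m ≤ (1 - m^2)/2 := nml_le_half (by linarith) hm1
  have hid : Real.negMulLog (1 - m) = (1 - m) * Real.log 2 + Real.negMulLog (2 * (1 - m)) / 2 := by
    rcases eq_or_lt_of_le hm1 with h | h
    · rw [← h]; simp
    · have hx : (0:ℝ) < 1 - m := by linarith
      simp only [Real.negMulLog, neg_mul]
      rw [Real.log_mul (by norm_num) (ne_of_gt hx)]
      ring
  have h2 : Real.negMulLog (2 * (1 - m)) ≤ (1 - (2 * (1 - m))^2)/2 :=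
    nml_le_half (by linarith) (by linarith)
  have hlog2 : (0.6931471803 : ℝ) < Real.log 2 := Real.log_two_gt_d9
  nlinarith [sq_nonneg (m - 3/4)]


section
variable {α : Type*} [Fintype α]

set_option maxHeartbeats 1000000 in
private lemma one_sided
    (P Q : α → ℝ) (W : α → Bool → ℝ) (δ : ℝ)
    (hP0 : ∀ x, 0 ≤ P x) (hP1 : ∑ x, P x = 1)
    (hQ0 : ∀ x, 0 ≤ Q x) (hQ1 : ∑ x, Q x = 1)
    (hW0 : ∀ x y, 0 ≤ W x y) (hW1 : ∀ x, ∑ y, W x y = 1)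
    (hδ0 : 0 < δ) (hδ1 : δ ≤ 1)
    (htv : (1 / 2) * ∑ x, |P x - Q x| ≤ δ) :
    ((∑ y, Real.negMulLog (∑ x, P x * W x y))
        - ∑ x, P x * ∑ y, Real.negMulLog (W x y))
      - ((∑ y, Real.negMulLog (∑ x, Q x * W x y))
        - ∑ x, Q x * ∑ y, Real.negMulLog (W x y))
      ≤ δ * (2 * Real.log 2 - Real.log δ) := by
  have hWsum : ∀ x, W x true + W x false = 1 := fun x => by
    have := hW1 x; rwa [Fintype.sum_bool] at this
  have hw1 : ∀ x, W x true ≤ 1 := fun x => by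
    have := hWsum x; have := hW0 x false; linarith
  have hWf : ∀ x, W x false = 1 - W x true := fun x => by have := hWsum x; linarith
  -- rewrite output entropy sums
  have e1 : ∀ (R : α → ℝ), (∑ x, R x = 1) →
      (∑ y, Real.negMulLog (∑ x, R x * W x y))
        = Real.negMulLog (∑ x, R x * W x true)
          + Real.negMulLog (1 - ∑ x, R x * W x true) := by
    intro R hR
    rw [Fintype.sum_bool]
    congr 2
    calc ∑ x, R x * W x false = ∑ x, (R x - R x * W x true) := by
          refine Finset.sum_congr rfl fun x _ => ?_
          rw [hWf x]; ring
      _ = 1 - ∑ x, R x * W x true := by rw [Finset.sum_sub_distrib, hR]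
  have e2 : ∀ (R : α → ℝ), (∑ x, R x * ∑ y, Real.negMulLog (W x y))
      = ∑ x, R x * (Real.negMulLog (W x true) + Real.negMulLog (1 - W x true)) := by
    intro R
    refine Finset.sum_congr rfl fun x _ => ?_
    rw [Fintype.sum_bool, hWf x]
  rw [e1 P hP1, e1 Q hQ1, e2 P, e2 Q]
  set hent : α → ℝ := fun x => Real.negMulLog (W x true) + Real.negMulLog (1 - W x true)
    with hent_def
  have hent0 : ∀ x, 0 ≤ hent x := fun x =>
    add_nonneg (Real.negMulLog_nonneg (hW0 x true) (hw1 x))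
      (Real.negMulLog_nonneg (by have := hw1 x; linarith) (by have := hW0 x true; linarith))
  set a := ∑ x, P x * W x true with ha_def
  set b := ∑ x, Q x * W x true with hb_def
  have ha0 : 0 ≤ a := Finset.sum_nonneg fun x _ => mul_nonneg (hP0 x) (hW0 x true)
  have ha1 : a ≤ 1 := by
    rw [ha_def, ← hP1]
    exact Finset.sum_le_sum fun x _ => by nlinarith [hP0 x, hw1 x, hW0 x true]
  have hb0 : 0 ≤ b := Finset.sum_nonneg fun x _ => mul_nonneg (hQ0 x) (hW0 x true)
  have hb1 : b ≤ 1 := by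
    rw [hb_def, ← hQ1]
    exact Finset.sum_le_sum fun x _ => by nlinarith [hQ0 x, hw1 x, hW0 x true]
  -- positive and negative parts
  set dm : α → ℝ := fun x => max (Q x - P x) 0 with hdm_def
  set dp : α → ℝ := fun x => max (P x - Q x) 0 with hdp_def
  have hdm0 : ∀ x, 0 ≤ dm x := fun x => le_max_right _ _
  have hdp0 : ∀ x, 0 ≤ dp x := fun x => le_max_right _ _
  have hsub : ∀ x, dp x - dm x = P x - Q x := by
    intro x
    rcases le_total (P x) (Q x) with h | h
    · rw [hdp_def, hdm_def]
      simp only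
      rw [max_eq_right (by linarith : P x - Q x ≤ 0), max_eq_left (by linarith : (0:ℝ) ≤ Q x - P x)]
      ring
    · rw [hdp_def, hdm_def]
      simp only
      rw [max_eq_left (by linarith : (0:ℝ) ≤ P x - Q x), max_eq_right (by linarith : Q x - P x ≤ 0)]
      ring
  have habs : ∀ x, dp x + dm x = |P x - Q x| := by
    intro x
    rcases le_total (P x) (Q x) with h | h
    · rw [hdp_def, hdm_def]
      simp only
      rw [max_eq_right (by linarith : P x - Q x ≤ 0), max_eq_left (by linarith : (0:ℝ) ≤ Q x - P x),
        abs_of_nonpos (by linarith : P x - Q x ≤ 0)]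
      ring
    · rw [hdp_def, hdm_def]
      simp only
      rw [max_eq_left (by linarith : (0:ℝ) ≤ P x - Q x), max_eq_right (by linarith : Q x - P x ≤ 0),
        abs_of_nonneg (by linarith : (0:ℝ) ≤ P x - Q x)]
      ring
  set t := ∑ x, dm x with ht_def
  have ht0 : 0 ≤ t := Finset.sum_nonneg fun x _ => hdm0 x
  have htp : ∑ x, dp x = t := by
    have h1 : ∑ x, (dp x - dm x) = 0 := by
      calc ∑ x, (dp x - dm x) = ∑ x, (P x - Q x) := Finset.sum_congr rfl fun x _ => hsub x
        _ = 0 := by rw [Finset.sum_sub_distrib, hP1, hQ1]; ring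
    rw [Finset.sum_sub_distrib] at h1
    linarith
  have htδ : t ≤ δ := by
    have h1 : ∑ x, (dp x + dm x) = ∑ x, |P x - Q x| := Finset.sum_congr rfl fun x _ => habs x
    rw [Finset.sum_add_distrib, htp] at h1
    linarith
  -- conditional entropy part
  have hesub : ∑ x, P x * hent x - ∑ x, Q x * hent x
      = ∑ x, dp x * hent x - ∑ x, dm x * hent x := by
    rw [← Finset.sum_sub_distrib, ← Finset.sum_sub_distrib]
    refine Finset.sum_congr rfl fun x _ => ?_
    linear_combination hent x * (hsub x).symm
  have hdpe : 0 ≤ ∑ x, dp x * hent x :=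
    Finset.sum_nonneg fun x _ => mul_nonneg (hdp0 x) (hent0 x)
  -- a - b decomposition
  have hab : a - b = ∑ x, dp x * W x true - ∑ x, dm x * W x true := by
    rw [ha_def, hb_def, ← Finset.sum_sub_distrib, ← Finset.sum_sub_distrib]
    refine Finset.sum_congr rfl fun x _ => ?_
    linear_combination W x true * (hsub x).symm
  have hdpw0 : 0 ≤ ∑ x, dp x * W x true :=
    Finset.sum_nonneg fun x _ => mul_nonneg (hdp0 x) (hW0 x true)
  have hdpw1 : ∑ x, dp x * W x true ≤ t := by
    rw [← htp]
    exact Finset.sum_le_sum fun x _ => by nlinarith [hdp0 x, hw1 x, hW0 x true]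
  have hdmw0 : 0 ≤ ∑ x, dm x * W x true :=
    Finset.sum_nonneg fun x _ => mul_nonneg (hdm0 x) (hW0 x true)
  have hdmw1 : ∑ x, dm x * W x true ≤ t :=
    Finset.sum_le_sum fun x _ => by nlinarith [hdm0 x, hw1 x, hW0 x true]
  -- case t = 0
  rcases eq_or_lt_of_le ht0 with hteq | htpos
  · have hdmz : ∀ x, dm x = 0 := by
      intro x
      have := (Finset.sum_eq_zero_iff_of_nonneg (fun i _ => hdm0 i)).mp hteq.symm
      exact this x (Finset.mem_univ x)
    have hdpz : ∀ x, dp x = 0 := by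
      intro x
      have hz : ∑ x, dp x = 0 := by rw [htp, ← hteq]
      have := (Finset.sum_eq_zero_iff_of_nonneg (fun i _ => hdp0 i)).mp hz
      exact this x (Finset.mem_univ x)
    have hPQ : ∀ x, P x = Q x := fun x => by
      have := hsub x; rw [hdpz x, hdmz x] at this; linarith
    have hab' : a = b := Finset.sum_congr rfl fun x _ => by rw [hPQ x]
    have hsame : ∑ x, P x * hent x = ∑ x, Q x * hent x :=
      Finset.sum_congr rfl fun x _ => by rw [hPQ x]
    have hlδ : Real.log δ ≤ 0 := Real.log_nonpos hδ0.le hδ1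
    have hl2 : 0 < Real.log 2 := Real.log_pos (by norm_num)
    have hrhs : 0 ≤ δ * (2 * Real.log 2 - Real.log δ) := by
      apply mul_nonneg hδ0.le
      linarith only [hlδ, hl2]
    rw [hab', hsame]
    linarith only [hrhs]
  · -- t > 0
    set s := (∑ x, dm x * W x true) / t with hs_def
    have hsw : ∑ x, dm x * W x true = t * s := by
      rw [hs_def]; field_simp
    have hs0 : 0 ≤ s := div_nonneg hdmw0 ht0
    have hs1 : s ≤ 1 := (div_le_one htpos).mpr hdmw1
    -- Jensen
    have hJ : ∀ (v : α → ℝ), (∀ x, 0 ≤ v x) →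
        ∑ x, dm x * Real.negMulLog (v x)
          ≤ t * Real.negMulLog ((∑ x, dm x * v x) / t) := by
      intro v hv0
      have h := Real.concaveOn_negMulLog.le_map_sum (t := Finset.univ)
        (w := fun x => dm x / t) (p := v)
        (fun i _ => div_nonneg (hdm0 i) ht0)
        (by rw [← Finset.sum_div]; exact div_self (ne_of_gt htpos))
        (fun i _ => Set.mem_Ici.mpr (hv0 i))
      have e : ∑ x, (dm x / t) • Real.negMulLog (v x)
          = (∑ x, dm x * Real.negMulLog (v x)) / t := by
        rw [Finset.sum_div]
        exact Finset.sum_congr rfl fun x _ => by rw [smul_eq_mul]; ring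
      have e' : ∑ x, (dm x / t) • v x = (∑ x, dm x * v x) / t := by
        rw [Finset.sum_div]
        exact Finset.sum_congr rfl fun x _ => by rw [smul_eq_mul]; ring
      rw [e, e'] at h
      calc ∑ x, dm x * Real.negMulLog (v x)
          = t * ((∑ x, dm x * Real.negMulLog (v x)) / t) := by field_simp
        _ ≤ t * Real.negMulLog ((∑ x, dm x * v x) / t) :=
            mul_le_mul_of_nonneg_left h ht0
    have hJ1 : ∑ x, dm x * Real.negMulLog (W x true) ≤ t * Real.negMulLog s := by
      have h := hJ (fun x => W x true) (fun x => hW0 x true)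
      rw [← hs_def] at h
      exact h
    have hJ2 : ∑ x, dm x * Real.negMulLog (1 - W x true) ≤ t * Real.negMulLog (1 - s) := by
      have h := hJ (fun x => 1 - W x true) (fun x => by
        show (0:ℝ) ≤ 1 - W x true
        linarith [hw1 x])
      have e : (∑ x, dm x * (1 - W x true)) / t = 1 - s := by
        have : ∑ x, dm x * (1 - W x true) = t - t * s := by
          rw [← hsw]
          calc ∑ x, dm x * (1 - W x true) = ∑ x, (dm x - dm x * W x true) := by
                refine Finset.sum_congr rfl fun x _ => by ring
            _ = t - ∑ x, dm x * W x true := by rw [Finset.sum_sub_distrib]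
        rw [this]; field_simp
      rw [e] at h
      exact h
    have hcond2 : ∑ x, dm x * hent x ≤ t * (Real.negMulLog s + Real.negMulLog (1 - s)) := by
      have hsplit : ∑ x, dm x * hent x
          = ∑ x, dm x * Real.negMulLog (W x true) + ∑ x, dm x * Real.negMulLog (1 - W x true) := by
        rw [← Finset.sum_add_distrib]
        exact Finset.sum_congr rfl fun x _ => by rw [hent_def]; ring
      rw [hsplit, mul_add]
      exact add_le_add hJ1 hJ2
    have hHs_le : Real.negMulLog s + Real.negMulLog (1 - s) ≤ Real.log 2 := binent_le
    have hHs0 : 0 ≤ Real.negMulLog s + Real.negMulLog (1 - s) :=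
      add_nonneg (Real.negMulLog_nonneg hs0 hs1)
        (Real.negMulLog_nonneg (by linarith) (by linarith))
    -- key reduction
    have key : (Real.negMulLog a + Real.negMulLog (1 - a)
          - ∑ x, P x * hent x)
        - (Real.negMulLog b + Real.negMulLog (1 - b) - ∑ x, Q x * hent x)
        ≤ (Real.negMulLog a + Real.negMulLog (1 - a)
            - (Real.negMulLog b + Real.negMulLog (1 - b)))
          + t * (Real.negMulLog s + Real.negMulLog (1 - s)) := by
      linarith only [hcond2, hdpe, hesub]
    refine le_trans key ?_
    rcases le_or_gt (1/2 : ℝ) δ with hhalf | hhalf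
    · -- δ ≥ 1/2 branch
      have hD1 : Real.negMulLog a + Real.negMulLog (1 - a)
          - (Real.negMulLog b + Real.negMulLog (1 - b)) ≤ Real.log 2 := by
        have h1 : Real.negMulLog a + Real.negMulLog (1 - a) ≤ Real.log 2 := binent_le
        have h2 : 0 ≤ Real.negMulLog b + Real.negMulLog (1 - b) :=
          add_nonneg (Real.negMulLog_nonneg hb0 hb1)
            (Real.negMulLog_nonneg (by linarith) (by linarith))
        linarith
      have hts : t * (Real.negMulLog s + Real.negMulLog (1 - s)) ≤ δ * Real.log 2 :=
        mul_le_mul htδ hHs_le hHs0 (le_trans ht0 htδ)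
      -- chord bound : (1-δ) log 2 ≤ negMulLog δ
      have hchord : (1 - δ) * Real.log 2 ≤ Real.negMulLog δ := by
        have hc := Real.concaveOn_negMulLog.2 (Set.mem_Ici.mpr (by norm_num : (0:ℝ) ≤ 1/2))
          (Set.mem_Ici.mpr (by norm_num : (0:ℝ) ≤ 1))
          (by linarith : (0:ℝ) ≤ 2*(1-δ)) (by linarith : (0:ℝ) ≤ 2*δ - 1) (by ring)
        have harg : (2*(1-δ)) • (1/2 : ℝ) + (2*δ - 1) • (1:ℝ) = δ := by
          simp only [smul_eq_mul]; ring
        have hhalfval : Real.negMulLog (1/2 : ℝ) = Real.log 2 / 2 := by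
          simp only [Real.negMulLog]
          rw [show (1/2 : ℝ) = 2⁻¹ by norm_num, Real.log_inv]
          ring
        rw [harg, hhalfval, Real.negMulLog_one] at hc
        simp only [smul_eq_mul] at hc
        linarith
      have hnml : Real.negMulLog δ = -(δ * Real.log δ) := by
        simp [Real.negMulLog]
      linarith only [hD1, hts, hchord, hnml]
    · -- δ < 1/2 branch
      set m := max s (1 - s) with hm_def
      have hm : 1/2 ≤ m := by
        rcases le_total s (1/2) with h | h
        · exact le_trans (by linarith) (le_max_right _ _)
        · exact le_trans h (le_max_left _ _)
      have hm1 : m ≤ 1 := max_le hs1 (by linarith)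
      have hEm : |a - b| ≤ t * m := by
        rw [abs_le]
        constructor
        · have h1 : b - a ≤ t * s := by linarith only [hab, hsw, hdpw0]
          have h2 : t * s ≤ t * m := mul_le_mul_of_nonneg_left (le_max_left _ _) ht0
          linarith only [h1, h2]
        · have e : t * (1 - s) = t - t * s := by ring
          have h1 : a - b ≤ t * (1 - s) := by linarith only [hab, hsw, hdpw1, e]
          have h2 : t * (1 - s) ≤ t * m := mul_le_mul_of_nonneg_left (le_max_right _ _) ht0
          linarith only [h1, h2]
      have hδm1 : δ * m ≤ 1 := by nlinarith [hm1, hδ0, hδ1, hm]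
      have htm : t * m ≤ δ * m := mul_le_mul_of_nonneg_right htδ (by linarith)
      have hd1 : Real.negMulLog a + Real.negMulLog (1 - a)
          - (Real.negMulLog b + Real.negMulLog (1 - b))
          ≤ Real.negMulLog |a - b| + |a - b| := hdiff ha0 ha1 hb0 hb1
      have hmono1 : Real.negMulLog |a - b| + |a - b| ≤ Real.negMulLog (δ * m) + δ * m := by
        have h := nml_mono (abs_nonneg (a - b)) (le_trans hEm htm) hδm1
        linarith only [h]
      have hts : t * (Real.negMulLog s + Real.negMulLog (1 - s))
          ≤ δ * (Real.negMulLog s + Real.negMulLog (1 - s)) :=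
        mul_le_mul_of_nonneg_right htδ hHs0
      have hHsm : Real.negMulLog s + Real.negMulLog (1 - s)
          = Real.negMulLog m + Real.negMulLog (1 - m) := by
        rcases le_total (1 - s) s with h | h
        · rw [hm_def, max_eq_left h]
        · rw [hm_def, max_eq_right h, show 1 - (1 - s) = s by ring]
          ring
      have hm0 : (0:ℝ) < m := by linarith
      have hlogm : Real.negMulLog (δ * m)
          = m * Real.negMulLog δ + δ * Real.negMulLog m := by
        simp only [Real.negMulLog, neg_mul]
        rw [Real.log_mul (ne_of_gt hδ0) (ne_of_gt hm0)]
        ring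
      have hlogδ2 : Real.log 2 ≤ -Real.log δ := by
        have h := Real.log_lt_log hδ0 hhalf
        rw [show (1/2:ℝ) = 2⁻¹ by norm_num, Real.log_inv] at h
        linarith
      have hθ := theta_fact hm hm1
      have h2 : (1 - m) * (δ * Real.log 2) ≤ (1 - m) * Real.negMulLog δ := by
        apply mul_le_mul_of_nonneg_left _ (by linarith : (0:ℝ) ≤ 1 - m)
        have : Real.negMulLog δ = δ * (-Real.log δ) := by simp only [Real.negMulLog]; ring
        rw [this]
        exact mul_le_mul_of_nonneg_left hlogδ2 hδ0.le
      have h1 : δ * (m + 2 * Real.negMulLog m + Real.negMulLog (1 - m))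
          ≤ δ * ((3 - m) * Real.log 2) := mul_le_mul_of_nonneg_left hθ hδ0.le
      have hnmlδ : Real.negMulLog δ = -(δ * Real.log δ) := by
        simp only [Real.negMulLog]; ring
      have hts' : t * (Real.negMulLog s + Real.negMulLog (1 - s))
          ≤ δ * (Real.negMulLog m + Real.negMulLog (1 - m)) := by
        rw [← hHsm]; exact hts
      have hfinal : Real.negMulLog (δ * m) + δ * m
          + δ * (Real.negMulLog m + Real.negMulLog (1 - m))
          ≤ δ * (2 * Real.log 2 - Real.log δ) := by
        rw [hlogm]
        linarith only [h1, h2, hnmlδ]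
      linarith only [hd1, hmono1, hts', hfinal]
end


/- STATEMENT 3: If d_TV(P,Q) ≤ δ ≤ 1 (with δ > 0), then the mutual informations of a
binary-output channel W under input distributions P and Q satisfy
|I_P(X;Y) - I_Q(X;Y)| ≤ δ log(4/δ). -/
theorem mutual_info_diff_le_tv
    {α : Type*} [Fintype α]
    (P Q : α → ℝ) (W : α → Bool → ℝ) (δ : ℝ)
    (hP0 : ∀ x, 0 ≤ P x) (hP1 : ∑ x, P x = 1)
    (hQ0 : ∀ x, 0 ≤ Q x) (hQ1 : ∑ x, Q x = 1)
    (hW0 : ∀ x y, 0 ≤ W x y) (hW1 : ∀ x, ∑ y, W x y = 1)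
    (hδ0 : 0 < δ) (hδ1 : δ ≤ 1)
    (htv : (1 / 2) * ∑ x, |P x - Q x| ≤ δ) :
    |((∑ y, Real.negMulLog (∑ x, P x * W x y))
        - ∑ x, P x * ∑ y, Real.negMulLog (W x y))
      - ((∑ y, Real.negMulLog (∑ x, Q x * W x y))
        - ∑ x, Q x * ∑ y, Real.negMulLog (W x y))|
      ≤ δ * Real.log (4 / δ) := by
  have hlog4 : Real.log (4 / δ) = 2 * Real.log 2 - Real.log δ := by
    rw [Real.log_div (by norm_num) (ne_of_gt hδ0),
      show (4:ℝ) = 2^2 by norm_num, Real.log_pow]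
    push_cast; ring
  rw [hlog4, abs_sub_le_iff]
  constructor
  · exact one_sided P Q W δ hP0 hP1 hQ0 hQ1 hW0 hW1 hδ0 hδ1 htv
  · apply one_sided Q P W δ hQ0 hQ1 hP0 hP1 hW0 hW1 hδ0 hδ1
    have e : ∑ x, |Q x - P x| = ∑ x, |P x - Q x| :=
      Finset.sum_congr rfl fun x _ => abs_sub_comm _ _
    rw [e]
    exact htv
end

section
/- The total variation distance between the Hypergeometric(k, m, p) distribution (sampling k items without replacement from a population of p items of which m are special, counting the special ones drawn) and the Binomial(k, m/p) distribution is at most (k-1)/(p-1). -/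
open Finset

namespace HypBinTV

noncomputable def Bb (q : ℝ) (k i : ℕ) : ℝ := (k.choose i : ℝ) * q ^ i * (1 - q) ^ (k - i)

noncomputable def Pp (q : ℝ) (k i : ℕ) : ℝ := ∑ l ∈ Finset.range i, Bb q k l

lemma Bb_pos {q : ℝ} (hq0 : 0 < q) (hq1 : q < 1) {k i : ℕ} (hik : i ≤ k) : 0 < Bb q k i := by
  have h1 : (0:ℝ) < 1 - q := by linarith
  have h2 : 0 < k.choose i := Nat.choose_pos hik
  unfold Bb
  positivity

lemma Bb_nonneg {q : ℝ} (hq0 : 0 < q) (hq1 : q < 1) (k i : ℕ) : 0 ≤ Bb q k i := by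
  have h1 : (0:ℝ) < 1 - q := by linarith
  unfold Bb
  positivity

lemma Bb_step (q : ℝ) {k i : ℕ} (h : i < k) :
    ((i:ℝ)+1) * (1-q) * Bb q k (i+1) = ((k:ℝ) - (i:ℝ)) * q * Bb q k i := by
  have hc : ((k.choose (i+1) * (i+1) : ℕ) : ℝ) = ((k.choose i * (k - i) : ℕ) : ℝ) := by
    exact_mod_cast congrArg (Nat.cast (R := ℝ)) (Nat.choose_succ_right_eq k i)
  have hki : k - i = (k - (i+1)) + 1 := by omega
  unfold Bb
  rw [hki]
  push_cast at hc ⊢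
  rw [Nat.cast_sub h.le] at hc
  linear_combination (q^i*q*(1-q)^(k-(i+1))*(1-q)) * hc

lemma Bb_succ_eq (q : ℝ) {k : ℕ} (hk : 1 ≤ k) (i : ℕ) :
    ((i:ℝ)+1) * Bb q k (i+1) = (k:ℝ) * q * Bb q (k-1) i := by
  have hc : (k * (k-1).choose i : ℕ) = k.choose (i+1) * (i+1) := by
    have := Nat.add_one_mul_choose_eq (k-1) i
    have hk1 : k - 1 + 1 = k := by omega
    simpa [hk1, Nat.succ_eq_add_one] using this
  have hcc : ((k : ℝ) * ((k-1).choose i : ℝ)) = (k.choose (i+1) : ℝ) * ((i:ℝ)+1) := by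
    exact_mod_cast congrArg (Nat.cast (R := ℝ)) hc
  have hpow : k - (i+1) = (k-1) - i := by omega
  unfold Bb
  rw [hpow]
  linear_combination (q^(i+1) * (1-q)^((k-1)-i)) * hcc.symm

lemma Bb_sub_eq (q : ℝ) {k : ℕ} (hk : 1 ≤ k) (i : ℕ) :
    ((k:ℝ) - (i:ℝ)) * Bb q k i = (k:ℝ) * (1-q) * Bb q (k-1) i := by
  rcases le_or_gt k i with hik | hik
  · -- i ≥ k : both sides zero? careful i = k : choose (k-1) k = 0, choose k k = 1 but (k-k)=0
    rcases eq_or_lt_of_le hik with rfl | hlt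
    · have h1 : (k-1).choose k = 0 := Nat.choose_eq_zero_of_lt (by omega)
      unfold Bb
      rw [h1]
      simp
    · have h1 : (k-1).choose i = 0 := Nat.choose_eq_zero_of_lt (by omega)
      have h2 : k.choose i = 0 := Nat.choose_eq_zero_of_lt hlt
      unfold Bb
      rw [h1, h2]
      simp
  · -- i < k
    have hc : (k.choose i * (k - i) : ℕ) = k.choose (i+1) * (i+1) := (Nat.choose_succ_right_eq k i).symm
    have hc2 : (k * (k-1).choose i : ℕ) = k.choose (i+1) * (i+1) := by
      have := Nat.add_one_mul_choose_eq (k-1) i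
      have hk1 : k - 1 + 1 = k := by omega
      simpa [hk1, Nat.succ_eq_add_one] using this
    have hc3 : (k.choose i * (k - i) : ℕ) = k * (k-1).choose i := hc.trans hc2.symm
    have hcc : ((k.choose i : ℝ)) * ((k:ℝ) - (i:ℝ)) = (k:ℝ) * ((k-1).choose i : ℝ) := by
      have := congrArg (Nat.cast (R := ℝ)) hc3
      push_cast at this
      rw [Nat.cast_sub hik.le] at this
      linarith [this]
    have hpow : k - i = ((k-1) - i) + 1 := by omega
    unfold Bb
    rw [hpow, pow_succ]
    linear_combination (q^i * (1-q)^((k-1)-i) * (1-q)) * hcc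

lemma Bb_sum (q : ℝ) (k : ℕ) : Pp q k (k+1) = 1 := by
  unfold Pp Bb
  have h := add_pow q (1-q) k
  simp only [add_sub_cancel, one_pow] at h
  rw [show ∑ l ∈ Finset.range (k+1), (k.choose l : ℝ) * q ^ l * (1 - q) ^ (k - l)
      = ∑ l ∈ Finset.range (k+1), q ^ l * (1 - q) ^ (k - l) * (k.choose l : ℝ) from
    Finset.sum_congr rfl (fun l _ => by ring), ← h]

lemma Bb_partial (q : ℝ) {k : ℕ} (hk : 1 ≤ k) :
    ∀ x, x ≤ k - 1 → ∑ l ∈ Finset.range (x+1), ((k:ℝ)*q - (l:ℝ)) * Bb q k l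
      = (k:ℝ)*q*(1-q) * Bb q (k-1) x := by
  intro x
  induction x with
  | zero =>
    intro _
    simp only [zero_add, Finset.sum_range_one, Nat.cast_zero, sub_zero]
    unfold Bb
    simp only [Nat.choose_zero_right, pow_zero, Nat.cast_one, one_mul, Nat.sub_zero]
    have h0 : (1-q)^k = (1-q) * (1-q)^(k-1) := by
      conv_lhs => rw [show k = (k-1)+1 by omega]
      rw [pow_succ]; ring
    rw [h0]; ring
  | succ x ih =>
    intro hx
    rw [Finset.sum_range_succ, ih (by omega)]
    have h1 := Bb_succ_eq q hk x
    have h2 := Bb_sub_eq q hk (x+1)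
    push_cast at h2 ⊢
    linear_combination q * h2 - (1-q) * h1

lemma Bb_mean (q : ℝ) {k : ℕ} (hk : 1 ≤ k) :
    ∑ l ∈ Finset.range (k+1), ((k:ℝ)*q - (l:ℝ)) * Bb q k l = 0 := by
  have hk1 : k = (k-1) + 1 := by omega
  rw [Finset.sum_range_succ, show Finset.range k = Finset.range ((k-1)+1) by rw [← hk1],
    Bb_partial q hk (k-1) le_rfl]
  have hBk : Bb q k k = q ^ k := by unfold Bb; simp
  have hBk' : Bb q (k-1) (k-1) = q ^ (k-1) := by unfold Bb; simp
  rw [hBk, hBk']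
  have : q ^ k = q * q ^ (k-1) := by
    conv_lhs => rw [hk1]
    rw [pow_succ]; ring
  rw [this]
  ring

lemma sum_shift (f : ℕ → ℝ) (i k : ℕ) (h : i ≤ k) :
    ∑ l ∈ Finset.Ico (i+1) (k+1), f (l-1) = ∑ l ∈ Finset.Ico i k, f l := by
  rw [Finset.sum_Ico_eq_sum_range, Finset.sum_Ico_eq_sum_range]
  have he : k + 1 - (i+1) = k - i := by omega
  rw [he]
  exact Finset.sum_congr rfl (fun j _ => by congr 1; omega)

lemma Pp_split {q : ℝ} {k i : ℕ} (hi : i ≤ k) :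
    1 - Pp q k (i+1) = ∑ l ∈ Finset.Ico (i+1) (k+1), Bb q k l := by
  have := Bb_sum q k
  unfold Pp at this ⊢
  rw [← Finset.sum_range_add_sum_Ico (Bb q k) (show i+1 ≤ k+1 by omega)] at this
  linarith

lemma Pp_nonneg {q : ℝ} (hq0 : 0 < q) (hq1 : q < 1) (k i : ℕ) : 0 ≤ Pp q k i := by
  unfold Pp
  exact Finset.sum_nonneg fun l _ => Bb_nonneg hq0 hq1 k l

lemma Pp_mono {q : ℝ} (hq0 : 0 < q) (hq1 : q < 1) (k : ℕ) {i j : ℕ} (h : i ≤ j) :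
    Pp q k i ≤ Pp q k j := by
  unfold Pp
  exact Finset.sum_le_sum_of_subset_of_nonneg (Finset.range_subset_range.2 h)
    (fun l _ _ => Bb_nonneg hq0 hq1 k l)

lemma Pp_le_one {q : ℝ} (hq0 : 0 < q) (hq1 : q < 1) {k i : ℕ} (h : i ≤ k + 1) :
    Pp q k i ≤ 1 := by
  calc Pp q k i ≤ Pp q k (k+1) := Pp_mono hq0 hq1 k h
  _ = 1 := Bb_sum q k

lemma mono1 {q : ℝ} (hq0 : 0 < q) (hq1 : q < 1) {k i : ℕ} (hi1 : 1 ≤ i) (hik : i ≤ k - 1)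
    (hk : 1 ≤ k) :
    ((k:ℝ) - (i:ℝ)) * q * Pp q k i ≤ (i:ℝ) * (1-q) * Pp q k (i+1) := by
  have h1q : (0:ℝ) < 1 - q := by linarith
  have step1 : ((k:ℝ) - (i:ℝ)) * q * Pp q k i ≤ ∑ l ∈ Finset.range i, ((l:ℝ)+1)*(1-q)*Bb q k (l+1) := by
    unfold Pp
    rw [Finset.mul_sum]
    apply Finset.sum_le_sum
    intro l hl
    have hl' : l < i := Finset.mem_range.1 hl
    have hb := Bb_nonneg hq0 hq1 k l
    have hcast : (l:ℝ) ≤ (i:ℝ) := by exact_mod_cast hl'.le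
    have key : ((k:ℝ) - i) * q * Bb q k l ≤ ((k:ℝ) - l) * q * Bb q k l := by
      apply mul_le_mul_of_nonneg_right _ hb
      apply mul_le_mul_of_nonneg_right _ hq0.le
      linarith
    exact key.trans_eq (Bb_step q (show l < k by omega)).symm
  have step2 : ∑ l ∈ Finset.range i, ((l:ℝ)+1)*(1-q)*Bb q k (l+1)
      ≤ (i:ℝ) * (1-q) * Pp q k (i+1) := by
    have h1 : ∑ l ∈ Finset.range i, ((l:ℝ)+1)*(1-q)*Bb q k (l+1)
        ≤ ∑ l ∈ Finset.range i, (i:ℝ)*(1-q)*Bb q k (l+1) := by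
      apply Finset.sum_le_sum
      intro l hl
      have hl' : l < i := Finset.mem_range.1 hl
      have hb := Bb_nonneg hq0 hq1 k (l+1)
      have hcast : ((l:ℝ)+1) ≤ (i:ℝ) := by exact_mod_cast hl'
      apply mul_le_mul_of_nonneg_right _ hb
      apply mul_le_mul_of_nonneg_right _ h1q.le
      exact hcast
    refine h1.trans ?_
    rw [← Finset.mul_sum]
    have hsum : ∑ l ∈ Finset.range i, Bb q k (l+1) ≤ Pp q k (i+1) := by
      unfold Pp
      rw [Finset.sum_range_succ' (Bb q k) i]
      have := Bb_nonneg hq0 hq1 k 0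
      linarith
    have hpos : (0:ℝ) ≤ (i:ℝ) * (1-q) := by positivity
    calc ((i:ℝ)*(1-q)) * ∑ l ∈ Finset.range i, Bb q k (l+1)
        ≤ ((i:ℝ)*(1-q)) * Pp q k (i+1) := mul_le_mul_of_nonneg_left hsum hpos
      _ = (i:ℝ)*(1-q) * Pp q k (i+1) := by ring
  linarith

lemma mono2 {q : ℝ} (hq0 : 0 < q) (hq1 : q < 1) {k i : ℕ} (hi1 : 1 ≤ i) (hik : i ≤ k - 1)
    (hk : 1 ≤ k) :
    (i:ℝ) * (1-q) * (1 - Pp q k (i+1)) ≤ ((k:ℝ) - (i:ℝ)) * q * (1 - Pp q k i) := by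
  have h1q : (0:ℝ) < 1 - q := by linarith
  have hik' : i ≤ k := by omega
  rw [Pp_split hik']
  have step1 : (i:ℝ) * (1-q) * (∑ l ∈ Finset.Ico (i+1) (k+1), Bb q k l)
      ≤ ((k:ℝ) - (i:ℝ)) * q * ∑ l ∈ Finset.Ico (i+1) (k+1), Bb q k (l-1) := by
    rw [Finset.mul_sum, Finset.mul_sum]
    apply Finset.sum_le_sum
    intro l hl
    obtain ⟨hl1, hl2⟩ := Finset.mem_Ico.1 hl
    have hstep := Bb_step q (show l - 1 < k by omega)
    have hll : l - 1 + 1 = l := by omega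
    rw [hll] at hstep
    have hb := Bb_nonneg hq0 hq1 k l
    have hb' := Bb_nonneg hq0 hq1 k (l-1)
    have hc1 : (i:ℝ) ≤ ((l-1:ℕ):ℝ) + 1 := by
      have : i ≤ (l-1) + 1 := by omega
      exact_mod_cast this
    have hc2 : (i:ℝ) ≤ ((l-1:ℕ):ℝ) := by
      have : i ≤ l - 1 := by omega
      exact_mod_cast this
    have c1 : (i:ℝ) * (1-q) * Bb q k l ≤ (((l-1:ℕ):ℝ)+1) * (1-q) * Bb q k l := by
      apply mul_le_mul_of_nonneg_right _ hb
      exact mul_le_mul_of_nonneg_right hc1 h1q.le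
    have c3 : ((k:ℝ) - ((l-1:ℕ):ℝ)) * q * Bb q k (l-1) ≤ ((k:ℝ) - (i:ℝ)) * q * Bb q k (l-1) := by
      apply mul_le_mul_of_nonneg_right _ hb'
      apply mul_le_mul_of_nonneg_right _ hq0.le
      linarith
    exact (c1.trans_eq hstep).trans c3
  have step2 : ∑ l ∈ Finset.Ico (i+1) (k+1), Bb q k (l-1) ≤ 1 - Pp q k i := by
    rw [sum_shift (Bb q k) i k hik']
    have hsplit : Pp q k i + ∑ l ∈ Finset.Ico i k, Bb q k l = Pp q k k := by
      unfold Pp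
      exact Finset.sum_range_add_sum_Ico (Bb q k) (show i ≤ k by omega)
    have : Pp q k k ≤ 1 := Pp_le_one hq0 hq1 (by omega)
    linarith
  have hpos : (0:ℝ) ≤ ((k:ℝ) - (i:ℝ)) * q := by
    have : (i:ℝ) ≤ (k:ℝ) := by exact_mod_cast hik'
    have : (0:ℝ) ≤ (k:ℝ) - (i:ℝ) := by linarith
    exact mul_nonneg this hq0.le
  exact step1.trans (mul_le_mul_of_nonneg_left step2 hpos)

lemma diag1 {q : ℝ} (hq0 : 0 < q) (hq1 : q < 1) {k i : ℕ} (hi1 : 1 ≤ i) (hik : i ≤ k - 1)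
    (hk : 1 ≤ k) (hkq : (i:ℝ) ≤ (k:ℝ)*q) :
    ((k:ℝ)*q - (i:ℝ)) * Pp q k i ≤ (1-q) * ((i:ℝ) * Bb q k i) := by
  have h1q : (0:ℝ) < 1 - q := by linarith
  have step1 : ((k:ℝ)*q - (i:ℝ)) * Pp q k i ≤ ∑ l ∈ Finset.range i, ((k:ℝ)*q - (l:ℝ)) * Bb q k l := by
    unfold Pp
    rw [Finset.mul_sum]
    apply Finset.sum_le_sum
    intro l hl
    have hl' : l < i := Finset.mem_range.1 hl
    have hb := Bb_nonneg hq0 hq1 k l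
    have hcast : (l:ℝ) ≤ (i:ℝ) := by exact_mod_cast hl'.le
    exact mul_le_mul_of_nonneg_right (by linarith) hb
  have step2 : ∑ l ∈ Finset.range i, ((k:ℝ)*q - (l:ℝ)) * Bb q k l
      = (k:ℝ)*q*(1-q) * Bb q (k-1) (i-1) := by
    have : i = (i-1) + 1 := by omega
    rw [this]
    exact Bb_partial q hk (i-1) (by omega)
  have step3 : (k:ℝ)*q * Bb q (k-1) (i-1) = (i:ℝ) * Bb q k i := by
    have h := Bb_succ_eq q hk (i-1)
    have hii : i - 1 + 1 = i := by omega
    rw [hii] at h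
    have hcast : ((i-1:ℕ):ℝ) + 1 = (i:ℝ) := by
      have : (i-1) + 1 = i := by omega
      exact_mod_cast this
    rw [hcast] at h
    linarith [h]
  calc ((k:ℝ)*q - (i:ℝ)) * Pp q k i ≤ (k:ℝ)*q*(1-q) * Bb q (k-1) (i-1) := by
        rw [← step2]; exact step1
    _ = (1-q) * ((k:ℝ)*q * Bb q (k-1) (i-1)) := by ring
    _ = (1-q) * ((i:ℝ) * Bb q k i) := by rw [step3]

lemma diag2 {q : ℝ} (hq0 : 0 < q) (hq1 : q < 1) {k i : ℕ} (hi1 : 1 ≤ i) (hik : i ≤ k - 1)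
    (hk : 1 ≤ k) (hkq : (k:ℝ)*q ≤ (i:ℝ)) :
    ((i:ℝ) - (k:ℝ)*q) * (1 - Pp q k (i+1)) ≤ q * (((k:ℝ) - (i:ℝ)) * Bb q k i) := by
  have h1q : (0:ℝ) < 1 - q := by linarith
  have hik' : i ≤ k := by omega
  rw [Pp_split hik']
  have step1 : ((i:ℝ) - (k:ℝ)*q) * (∑ l ∈ Finset.Ico (i+1) (k+1), Bb q k l)
      ≤ ∑ l ∈ Finset.Ico (i+1) (k+1), ((l:ℝ) - (k:ℝ)*q) * Bb q k l := by
    rw [Finset.mul_sum]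
    apply Finset.sum_le_sum
    intro l hl
    obtain ⟨hl1, hl2⟩ := Finset.mem_Ico.1 hl
    have hb := Bb_nonneg hq0 hq1 k l
    have hcast : (i:ℝ) ≤ (l:ℝ) := by exact_mod_cast (show i ≤ l by omega)
    exact mul_le_mul_of_nonneg_right (by linarith) hb
  have step2 : ∑ l ∈ Finset.Ico (i+1) (k+1), ((l:ℝ) - (k:ℝ)*q) * Bb q k l
      = ∑ l ∈ Finset.range (i+1), ((k:ℝ)*q - (l:ℝ)) * Bb q k l := by
    have hmean := Bb_mean q hk
    rw [← Finset.sum_range_add_sum_Ico (fun l => ((k:ℝ)*q - (l:ℝ)) * Bb q k l)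
      (show i+1 ≤ k+1 by omega)] at hmean
    have : ∑ l ∈ Finset.Ico (i+1) (k+1), ((l:ℝ) - (k:ℝ)*q) * Bb q k l
        = - ∑ l ∈ Finset.Ico (i+1) (k+1), ((k:ℝ)*q - (l:ℝ)) * Bb q k l := by
      rw [← Finset.sum_neg_distrib]
      exact Finset.sum_congr rfl (fun l _ => by ring)
    rw [this]
    linarith
  have step3 : ∑ l ∈ Finset.range (i+1), ((k:ℝ)*q - (l:ℝ)) * Bb q k l
      = (k:ℝ)*q*(1-q) * Bb q (k-1) i := Bb_partial q hk i hik
  have step4 : ((k:ℝ) - (i:ℝ)) * Bb q k i = (k:ℝ)*(1-q) * Bb q (k-1) i := Bb_sub_eq q hk i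
  calc ((i:ℝ) - (k:ℝ)*q) * (∑ l ∈ Finset.Ico (i+1) (k+1), Bb q k l)
      ≤ (k:ℝ)*q*(1-q) * Bb q (k-1) i := by rw [← step3, ← step2]; exact step1
    _ = q * ((k:ℝ)*(1-q) * Bb q (k-1) i) := by ring
    _ = q * (((k:ℝ) - (i:ℝ)) * Bb q k i) := by rw [← step4]

noncomputable def gg (q : ℝ) (k j i : ℕ) : ℝ :=
  if i = 0 then 0 else
    Bb q k j * ((if j < i then 1 else 0) - Pp q k i) / ((i : ℝ) * (1 - q) * Bb q k i)

lemma gg_eq (q : ℝ) (k j : ℕ) {i : ℕ} (hi : i ≠ 0) :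
    gg q k j i = Bb q k j * ((if j < i then 1 else 0) - Pp q k i) / ((i : ℝ) * (1 - q) * Bb q k i) :=
  if_neg hi

lemma ggE2 {q : ℝ} (hq0 : 0 < q) (hq1 : q < 1) {k i : ℕ} (j : ℕ) (hik : i ≤ k) :
    (i:ℝ) * (1-q) * gg q k j i
      = Bb q k j * ((if j < i then 1 else 0) - Pp q k i) / Bb q k i := by
  rcases Nat.eq_zero_or_pos i with rfl | hi0
  · have : Pp q k 0 = 0 := by unfold Pp; simp
    simp [gg, this]
  · rw [gg_eq q k j hi0.ne']
    have hBi := Bb_pos hq0 hq1 hik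
    have h1q : (0:ℝ) < 1 - q := by linarith
    have hi0' : (0:ℝ) < (i:ℝ) := by exact_mod_cast hi0
    field_simp

lemma ggE1 {q : ℝ} (hq0 : 0 < q) (hq1 : q < 1) {k i j : ℕ} (hik : i ≤ k) (hjk : j ≤ k) :
    ((k:ℝ) - (i:ℝ)) * q * gg q k j (i+1)
      = Bb q k j * ((if j < i+1 then 1 else 0) - Pp q k (i+1)) / Bb q k i := by
  rcases eq_or_lt_of_le hik with rfl | hik'
  · have h1 : (if j < i+1 then (1:ℝ) else 0) = 1 := if_pos (by omega)
    rw [h1, Bb_sum q i]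
    simp
  · rw [gg_eq q k j (Nat.succ_ne_zero i)]
    have hBi := Bb_pos hq0 hq1 hik
    have hBi1 := Bb_pos hq0 hq1 (show i+1 ≤ k by omega)
    have h1q : (0:ℝ) < 1 - q := by linarith
    have hki : (0:ℝ) < (k:ℝ) - (i:ℝ) := by
      have : (i:ℝ) < (k:ℝ) := by exact_mod_cast hik'
      linarith
    have hstep := Bb_step q hik'
    have hcast : ((i+1:ℕ):ℝ) = (i:ℝ) + 1 := by push_cast; ring
    rw [hcast, hstep]
    field_simp

lemma ggG1 {q : ℝ} (hq0 : 0 < q) (hq1 : q < 1) {k i j : ℕ} (hik : i ≤ k) (hjk : j ≤ k) :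
    ((k:ℝ) - (i:ℝ)) * q * gg q k j (i+1) - (i:ℝ) * (1-q) * gg q k j i
      = (if i = j then 1 else 0) - Bb q k j := by
  rw [ggE1 hq0 hq1 hik hjk, ggE2 hq0 hq1 j hik]
  have hBi := Bb_pos hq0 hq1 hik
  have hPp : Pp q k (i+1) = Pp q k i + Bb q k i := by
    unfold Pp
    exact Finset.sum_range_succ (Bb q k) i
  rw [hPp]
  rcases eq_or_ne i j with rfl | hij
  · rw [if_pos (by omega : i < i + 1), if_neg (lt_irrefl i), if_pos rfl]
    field_simp
    ring
  · have h1 : (if j < i+1 then (1:ℝ) else 0) = (if j < i then 1 else 0) := by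
      rcases lt_trichotomy j i with h | h | h
      · rw [if_pos (by omega), if_pos h]
      · exact absurd h.symm hij
      · rw [if_neg (by omega), if_neg (by omega)]
    rw [h1, if_neg hij]
    field_simp
    ring

lemma ggG2 {q : ℝ} (hq0 : 0 < q) (hq1 : q < 1) {k i j : ℕ} (hjk : j ≤ k)
    (hi1 : 1 ≤ i) (hik : i ≤ k - 1) (hk : 1 ≤ k) (hij : i ≠ j) :
    gg q k j (i+1) ≤ gg q k j i := by
  have hik' : i < k := by omega
  have hBi := Bb_pos hq0 hq1 hik'.le
  have hBi1 := Bb_pos hq0 hq1 (show i+1 ≤ k by omega)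
  have hBj := Bb_pos hq0 hq1 hjk
  have h1q : (0:ℝ) < 1 - q := by linarith
  have hi0 : (0:ℝ) < (i:ℝ) := by exact_mod_cast hi1
  have hD1 : (0:ℝ) < (i:ℝ) * (1-q) * Bb q k i := by positivity
  have hD2 : (0:ℝ) < ((i:ℝ)+1) * (1-q) * Bb q k (i+1) := by positivity
  rw [gg_eq q k j (Nat.succ_ne_zero i), gg_eq q k j (by omega : i ≠ 0)]
  push_cast
  rw [div_le_div_iff₀ hD2 hD1]
  rw [Bb_step q hik']
  have m1 := mono1 hq0 hq1 hi1 hik hk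
  have m2 := mono2 hq0 hq1 hi1 hik hk
  rcases Nat.lt_or_ge j i with hji | hji
  · rw [if_pos hji, if_pos (by omega : j < i + 1)]
    nlinarith [mul_le_mul_of_nonneg_left m2 (mul_nonneg hBj.le hBi.le)]
  · have hij' : i < j := by omega
    rw [if_neg (by omega : ¬ j < i), if_neg (by omega : ¬ j < i + 1)]
    nlinarith [mul_le_mul_of_nonneg_left m1 (mul_nonneg hBj.le hBi.le)]

lemma ggG3 {q : ℝ} (hq0 : 0 < q) (hq1 : q < 1) {k i : ℕ}
    (hi1 : 1 ≤ i) (hik : i ≤ k - 1) (hk : 1 ≤ k) :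
    gg q k i (i+1) - gg q k i i ≤ 1/((k:ℝ)*q*(1-q)) := by
  have hik' : i < k := by omega
  have hBi := Bb_pos hq0 hq1 hik'.le
  have h1q : (0:ℝ) < 1 - q := by linarith
  have hi0 : (0:ℝ) < (i:ℝ) := by exact_mod_cast hi1
  have hkR : (0:ℝ) < (k:ℝ) := by exact_mod_cast (show 0 < k by omega)
  have hki : (0:ℝ) < (k:ℝ) - (i:ℝ) := by
    have : (i:ℝ) < (k:ℝ) := by exact_mod_cast hik'
    linarith
  set G' := 1 - Pp q k (i+1) with hG'def
  set Pi := Pp q k i with hPidef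
  have hX : (((k:ℝ) - (i:ℝ)) * q) * gg q k i (i+1) = G' := by
    have h := ggE1 hq0 hq1 (j := i) hik'.le hik'.le
    rw [if_pos (by omega : i < i + 1)] at h
    rw [h]
    field_simp
    rfl
  have hY : ((i:ℝ) * (1-q)) * gg q k i i = -Pi := by
    have h := ggE2 hq0 hq1 (i := i) i hik'.le
    rw [if_neg (lt_irrefl i)] at h
    rw [h]
    field_simp
    ring
  have hG'0 : 0 ≤ G' := by
    have := Pp_le_one hq0 hq1 (show i+1 ≤ k+1 by omega)
    rw [hG'def]; linarith
  have hPi0 : 0 ≤ Pi := Pp_nonneg hq0 hq1 k i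
  have hsum : Pi + Bb q k i + G' = 1 := by
    have hPp : Pp q k (i+1) = Pp q k i + Bb q k i := Finset.sum_range_succ (Bb q k) i
    rw [hG'def, hPidef, hPp]; ring
  have key : (k:ℝ)*((1-q)*((i:ℝ)*G')) + (k:ℝ)*(q*(((k:ℝ)-(i:ℝ))*Pi)) ≤ (i:ℝ)*((k:ℝ)-(i:ℝ)) := by
    have e3 : (i:ℝ)*((k:ℝ)-(i:ℝ))*(Pi + Bb q k i + G') = (i:ℝ)*((k:ℝ)-(i:ℝ)) := by
      rw [hsum, mul_one]
    rcases le_total (i:ℝ) ((k:ℝ)*q) with hc | hc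
    · have d1 := diag1 hq0 hq1 hi1 hik hk hc
      rw [← hPidef] at d1
      have e1 := mul_le_mul_of_nonneg_left d1 hki.le
      have e2 := mul_le_mul_of_nonneg_right (show (k:ℝ)*(1-q) ≤ (k:ℝ)-(i:ℝ) by nlinarith)
        (mul_nonneg hi0.le hG'0)
      have h3 : (0:ℝ) ≤ ((k:ℝ)-(i:ℝ))*(i:ℝ)*(q*Bb q k i) :=
        mul_nonneg (mul_nonneg hki.le hi0.le) (mul_nonneg hq0.le hBi.le)
      nlinarith [e1, e2, e3, h3]
    · have d2 := diag2 hq0 hq1 hi1 hik hk hc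
      rw [← hG'def] at d2
      have e1 := mul_le_mul_of_nonneg_left d2 hi0.le
      have e2 := mul_le_mul_of_nonneg_right hc (mul_nonneg hki.le hPi0)
      have h3 : (0:ℝ) ≤ (i:ℝ)*((k:ℝ)-(i:ℝ))*((1-q)*Bb q k i) :=
        mul_nonneg (mul_nonneg hi0.le hki.le) (mul_nonneg h1q.le hBi.le)
      nlinarith [e1, e2, e3, h3]
  have ha : (0:ℝ) < ((k:ℝ)-(i:ℝ))*q := mul_pos hki hq0
  have hb : (0:ℝ) < (i:ℝ)*(1-q) := mul_pos hi0 h1q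
  have hc' : (0:ℝ) < (k:ℝ)*q*(1-q) := by positivity
  have hXv : gg q k i (i+1) = G' / (((k:ℝ)-(i:ℝ))*q) := by
    rw [eq_div_iff ha.ne']
    linarith [hX]
  have hYv : gg q k i i = -Pi / ((i:ℝ)*(1-q)) := by
    rw [eq_div_iff hb.ne']
    linarith [hY]
  rw [hXv, hYv]
  rw [div_sub_div _ _ ha.ne' hb.ne', div_le_div_iff₀ (mul_pos ha hb) hc']
  nlinarith [mul_le_mul_of_nonneg_left key (mul_nonneg hq0.le h1q.le)]

lemma Bb_high {q : ℝ} {k l : ℕ} (h : k < l) : Bb q k l = 0 := by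
  unfold Bb
  rw [Nat.choose_eq_zero_of_lt h]
  simp

lemma gg_total (q : ℝ) (k : ℕ) {i : ℕ} (hi : i ≤ k + 1) :
    ∑ j ∈ Finset.range (k+1), gg q k j i = 0 := by
  rcases Nat.eq_zero_or_pos i with rfl | hi0
  · simp [gg]
  · have hcong : ∀ j ∈ Finset.range (k+1), gg q k j i
        = Bb q k j * ((if j < i then 1 else 0) - Pp q k i) / ((i : ℝ) * (1 - q) * Bb q k i) :=
      fun j _ => gg_eq q k j hi0.ne'
    rw [Finset.sum_congr rfl hcong, ← Finset.sum_div]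
    have hnum : ∑ j ∈ Finset.range (k+1), Bb q k j * ((if j < i then 1 else 0) - Pp q k i) = 0 := by
      have hsub : ∑ j ∈ Finset.range (k+1), Bb q k j * ((if j < i then 1 else 0) - Pp q k i)
          = (∑ j ∈ Finset.range (k+1), Bb q k j * (if j < i then 1 else 0))
            - (∑ j ∈ Finset.range (k+1), Bb q k j) * Pp q k i := by
        rw [Finset.sum_mul, ← Finset.sum_sub_distrib]
        exact Finset.sum_congr rfl (fun j _ => by ring)
      have h1 : ∑ j ∈ Finset.range (k+1), Bb q k j * (if j < i then 1 else 0) = Pp q k i := by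
        rw [← Finset.sum_range_add_sum_Ico (fun j => Bb q k j * (if j < i then 1 else 0)) hi]
        have ha : ∑ j ∈ Finset.range i, Bb q k j * (if j < i then 1 else 0) = Pp q k i := by
          unfold Pp
          refine Finset.sum_congr rfl (fun j hj => ?_)
          rw [if_pos (Finset.mem_range.1 hj)]
          ring
        have hb : ∑ j ∈ Finset.Ico i (k+1), Bb q k j * (if j < i then 1 else 0) = 0 := by
          refine Finset.sum_eq_zero (fun j hj => ?_)
          rw [if_neg (by have := (Finset.mem_Ico.1 hj).1; omega)]
          ring
        rw [ha, hb, add_zero]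
      have h2 : ∑ j ∈ Finset.range (k+1), Bb q k j = 1 := Bb_sum q k
      rw [hsub, h1, h2, one_mul, sub_self]
    rw [hnum, zero_div]

lemma gg_delta_sum_le {q : ℝ} (hq0 : 0 < q) (hq1 : q < 1) {k i : ℕ}
    (hi1 : 1 ≤ i) (hik : i ≤ k - 1) (hk : 1 ≤ k)
    (S : Finset ℕ) (hS : S ⊆ Finset.range (k+1)) :
    ∑ j ∈ S, (gg q k j (i+1) - gg q k j i) ≤ 1/((k:ℝ)*q*(1-q)) := by
  have hb : ∀ j ∈ S, gg q k j (i+1) - gg q k j i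
      ≤ (if i = j then gg q k j (i+1) - gg q k j i else 0) := by
    intro j hj
    have hjk : j ≤ k := by
      have := Finset.mem_range.1 (hS hj); omega
    rcases eq_or_ne i j with rfl | hij
    · rw [if_pos rfl]
    · rw [if_neg hij]
      have := ggG2 hq0 hq1 hjk hi1 hik hk hij
      linarith
  have hkR : (0:ℝ) < (k:ℝ) := by exact_mod_cast (show 0 < k by omega)
  have h1q : (0:ℝ) < 1 - q := by linarith
  calc ∑ j ∈ S, (gg q k j (i+1) - gg q k j i)
      ≤ ∑ j ∈ S, (if i = j then gg q k j (i+1) - gg q k j i else 0) := Finset.sum_le_sum hb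
    _ = if i ∈ S then gg q k i (i+1) - gg q k i i else 0 :=
        Finset.sum_ite_eq S i (fun j => gg q k j (i+1) - gg q k j i)
    _ ≤ 1/((k:ℝ)*q*(1-q)) := by
        have hbound := ggG3 hq0 hq1 hi1 hik hk
        have hpos : (0:ℝ) ≤ 1/((k:ℝ)*q*(1-q)) := by positivity
        split
        · exact hbound
        · exact hpos

lemma gg_delta_abs {q : ℝ} (hq0 : 0 < q) (hq1 : q < 1) {k i : ℕ}
    (hi1 : 1 ≤ i) (hik : i ≤ k - 1) (hk : 1 ≤ k)
    (A : Finset ℕ) (hA : A ⊆ Finset.range (k+1)) :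
    |∑ j ∈ A, gg q k j (i+1) - ∑ j ∈ A, gg q k j i| ≤ 1/((k:ℝ)*q*(1-q)) := by
  rw [← Finset.sum_sub_distrib, abs_le]
  constructor
  · have htot1 : ∑ j ∈ Finset.range (k+1), gg q k j (i+1) = 0 := gg_total q k (by omega)
    have htot0 : ∑ j ∈ Finset.range (k+1), gg q k j i = 0 := gg_total q k (by omega)
    have hcompl := gg_delta_sum_le hq0 hq1 hi1 hik hk (Finset.range (k+1) \ A)
      (Finset.sdiff_subset)
    have hr : ∑ j ∈ Finset.range (k+1), (gg q k j (i+1) - gg q k j i) = 0 := by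
      rw [Finset.sum_sub_distrib, htot1, htot0]; ring
    have hsplit := Finset.sum_sdiff (f := fun j => gg q k j (i+1) - gg q k j i) hA
    rw [hr] at hsplit
    linarith [hcompl, hsplit]
  · exact gg_delta_sum_le hq0 hq1 hi1 hik hk A hA

noncomputable def Hh (p k m i : ℕ) : ℝ :=
  ((m.choose i * (p - m).choose (k - i) : ℕ) : ℝ) / (p.choose k : ℝ)

lemma Hh_nonneg (p k m i : ℕ) : 0 ≤ Hh p k m i := by
  unfold Hh
  positivity

lemma Hh_sum {p k m : ℕ} (hk : k ≤ p) (hm : m ≤ p) :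
    ∑ i ∈ Finset.range (k+1), Hh p k m i = 1 := by
  have hv : ∑ i ∈ Finset.range (k+1), m.choose i * (p-m).choose (k-i) = p.choose k := by
    have h := Nat.add_choose_eq m (p-m) k
    rw [Finset.Nat.sum_antidiagonal_eq_sum_range_succ_mk] at h
    rw [show m + (p - m) = p by omega] at h
    exact h.symm
  unfold Hh
  rw [← Finset.sum_div]
  have hpk : (0:ℝ) < (p.choose k : ℝ) := by exact_mod_cast Nat.choose_pos hk
  rw [show (∑ i ∈ Finset.range (k+1), ((m.choose i * (p-m).choose (k-i) : ℕ):ℝ))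
      = ((∑ i ∈ Finset.range (k+1), m.choose i * (p-m).choose (k-i) : ℕ):ℝ) by push_cast; rfl]
  rw [hv]
  exact div_self hpk.ne'

def aa (p k m i : ℕ) : ℕ := (k-i)*(m-i)*(m.choose i * (p-m).choose (k-i))
def bb (p k m i : ℕ) : ℕ := i*((p-m)-(k-i))*(m.choose i * (p-m).choose (k-i))

lemma ab_succ {p k m i : ℕ} (h : i < k) : aa p k m i = bb p k m (i+1) := by
  have h1 : m.choose i * (m - i) = m.choose (i+1) * (i+1) := (Nat.choose_succ_right_eq m i).symm
  have h2 : (p-m).choose (k-i-1) * ((p-m) - (k-i-1)) = (p-m).choose (k-i) * (k-i) := by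
    have h3 := Nat.choose_succ_right_eq (p-m) (k-i-1)
    rw [show k-i-1+1 = k-i by omega] at h3
    exact h3.symm
  unfold aa bb
  rw [show k - (i+1) = k-i-1 by omega]
  calc (k-i)*(m-i)*(m.choose i * (p-m).choose (k-i))
      = (m.choose i * (m-i)) * ((p-m).choose (k-i) * (k-i)) := by ring
    _ = (m.choose (i+1) * (i+1)) * ((p-m).choose (k-i-1) * ((p-m)-(k-i-1))) := by rw [h1, ← h2]
    _ = (i+1)*((p-m)-(k-i-1))*(m.choose (i+1) * (p-m).choose (k-i-1)) := by ring

lemma hyper_telescope (p k m : ℕ) (f : ℕ → ℝ) :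
    ∑ i ∈ Finset.range (k+1),
      (((aa p k m i : ℕ):ℝ) * f (i+1) - ((bb p k m i : ℕ):ℝ) * f i) = 0 := by
  rw [Finset.sum_sub_distrib]
  have h1 : ∑ i ∈ Finset.range (k+1), ((aa p k m i : ℕ):ℝ) * f (i+1)
      = ∑ i ∈ Finset.range (k+1), ((bb p k m i : ℕ):ℝ) * f i := by
    rw [Finset.sum_range_succ]
    have haak : aa p k m k = 0 := by unfold aa; rw [Nat.sub_self]; ring
    rw [haak]
    rw [Finset.sum_range_succ' (fun i => ((bb p k m i : ℕ):ℝ) * f i) k]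
    have hbb0 : bb p k m 0 = 0 := by unfold bb; ring
    rw [hbb0]
    simp only [Nat.cast_zero, zero_mul, add_zero]
    exact Finset.sum_congr rfl (fun i hi => by rw [ab_succ (Finset.mem_range.1 hi)])
  rw [h1, sub_self]

lemma aa_cast {p k m i : ℕ} (hik : i ≤ k) :
    ((aa p k m i : ℕ):ℝ) / (p.choose k : ℝ) = ((k:ℝ)-(i:ℝ))*((m:ℝ)-(i:ℝ))*Hh p k m i := by
  rcases le_or_gt i m with him | him
  · unfold aa Hh
    push_cast [Nat.cast_sub him, Nat.cast_sub hik]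
    ring
  · have hc : m.choose i = 0 := Nat.choose_eq_zero_of_lt him
    unfold aa Hh
    rw [hc]
    simp

lemma bb_cast {p k m i : ℕ} (hik : i ≤ k) (hmp : m ≤ p) :
    ((bb p k m i : ℕ):ℝ) / (p.choose k : ℝ)
      = (i:ℝ)*(((p:ℝ)-(m:ℝ))-((k:ℝ)-(i:ℝ)))*Hh p k m i := by
  rcases le_or_gt (k-i) (p-m) with h | h
  · unfold bb Hh
    push_cast [Nat.cast_sub h, Nat.cast_sub hik, Nat.cast_sub hmp]
    ring
  · have hc : (p-m).choose (k-i) = 0 := Nat.choose_eq_zero_of_lt h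
    unfold bb Hh
    rw [hc]
    simp

lemma moment_nat {p k m : ℕ} (hm0 : 0 < m) (hmp : m < p) (hk2 : 2 ≤ k) :
    ∑ i ∈ Finset.range (k+1), i*(k-i)*(m.choose i * (p-m).choose (k-i))
      = m*(p-m)*((p-2).choose (k-2)) := by
  rw [Finset.sum_range_succ]
  rw [Nat.sub_self]
  rw [show k*0*(m.choose k * (p-m).choose 0) = 0 by ring]
  rw [show Finset.range k = Finset.range ((k-1)+1) from by rw [show (k-1)+1 = k by omega]]
  rw [Finset.sum_range_succ' (fun i => i*(k-i)*(m.choose i * (p-m).choose (k-i))) (k-1)]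
  rw [show (0:ℕ)*(k-0)*(m.choose 0 * (p-m).choose (k-0)) = 0 by ring]
  have hterm : ∀ j ∈ Finset.range (k-1), (j+1)*(k-(j+1))*(m.choose (j+1) * (p-m).choose (k-(j+1)))
      = m*(p-m)*((m-1).choose j * ((p-m)-1).choose ((k-2)-j)) := by
    intro j hj
    have hjk : j ≤ k - 2 := by have := Finset.mem_range.1 hj; omega
    have hA : m * (m-1).choose j = m.choose (j+1) * (j+1) := by
      have := Nat.add_one_mul_choose_eq (m-1) j
      rwa [show m-1+1 = m by omega] at this
    have hB : (p-m) * ((p-m)-1).choose ((k-2)-j) = (p-m).choose (k-(j+1)) * (k-(j+1)) := by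
      have := Nat.add_one_mul_choose_eq ((p-m)-1) ((k-2)-j)
      rw [show (p-m)-1+1 = p-m by omega] at this
      rwa [show (k-2)-j+1 = k-(j+1) by omega] at this
    calc (j+1)*(k-(j+1))*(m.choose (j+1) * (p-m).choose (k-(j+1)))
        = (m.choose (j+1) * (j+1)) * ((p-m).choose (k-(j+1)) * (k-(j+1))) := by ring
      _ = (m * (m-1).choose j) * ((p-m) * ((p-m)-1).choose ((k-2)-j)) := by rw [hA, hB]
      _ = m*(p-m)*((m-1).choose j * ((p-m)-1).choose ((k-2)-j)) := by ring
  rw [Finset.sum_congr rfl hterm]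
  rw [← Finset.mul_sum]
  simp only [add_zero]
  have hv := Nat.add_choose_eq (m-1) ((p-m)-1) (k-2)
  rw [Finset.Nat.sum_antidiagonal_eq_sum_range_succ_mk] at hv
  simp only at hv
  rw [show (m-1) + ((p-m)-1) = p - 2 by omega] at hv
  rw [show (k-2).succ = k-1 by omega] at hv
  rw [hv]

lemma choose_pp {p k : ℕ} (hk2 : 2 ≤ k) (hkp : k ≤ p) :
    p*(p-1)*((p-2).choose (k-2)) = k*(k-1)*(p.choose k) := by
  have h1 : p * (p-1).choose (k-1) = p.choose k * k := by
    have := Nat.add_one_mul_choose_eq (p-1) (k-1)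
    rwa [show p-1+1 = p by omega, show k-1+1 = k by omega] at this
  have h2 : (p-1) * (p-2).choose (k-2) = (p-1).choose (k-1) * (k-1) := by
    have := Nat.add_one_mul_choose_eq (p-2) (k-2)
    rwa [show p-2+1 = p-1 by omega, show k-2+1 = k-1 by omega] at this
  calc p*(p-1)*((p-2).choose (k-2)) = p*((p-1) * (p-2).choose (k-2)) := by ring
    _ = p*((p-1).choose (k-1) * (k-1)) := by rw [h2]
    _ = (p * (p-1).choose (k-1)) * (k-1) := by ring
    _ = (p.choose k * k) * (k-1) := by rw [h1]
    _ = k*(k-1)*(p.choose k) := by ring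

lemma moment_real {p k m : ℕ} (hm0 : 0 < m) (hmp : m < p) (hk2 : 2 ≤ k) (hkp : k ≤ p) :
    ∑ i ∈ Finset.range (k+1), (i:ℝ)*((k:ℝ)-(i:ℝ))*Hh p k m i
      = (k:ℝ)*((k:ℝ)-1)*(m:ℝ)*((p:ℝ)-(m:ℝ))/((p:ℝ)*((p:ℝ)-1)) := by
  have hterm : ∀ i ∈ Finset.range (k+1), (i:ℝ)*((k:ℝ)-(i:ℝ))*Hh p k m i
      = ((i*(k-i)*(m.choose i * (p-m).choose (k-i)) : ℕ):ℝ) / (p.choose k : ℝ) := by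
    intro i hi
    have hik : i ≤ k := by have := Finset.mem_range.1 hi; omega
    unfold Hh
    push_cast [Nat.cast_sub hik]
    ring
  rw [Finset.sum_congr rfl hterm, ← Finset.sum_div]
  rw [show (∑ i ∈ Finset.range (k+1), ((i*(k-i)*(m.choose i * (p-m).choose (k-i)) : ℕ):ℝ))
      = ((∑ i ∈ Finset.range (k+1), i*(k-i)*(m.choose i * (p-m).choose (k-i)) : ℕ):ℝ) by
    push_cast; rfl]
  rw [moment_nat hm0 hmp hk2]
  have hcast : (p:ℝ)*((p:ℝ)-1)*(((p-2).choose (k-2) : ℕ):ℝ)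
      = (k:ℝ)*((k:ℝ)-1)*((p.choose k : ℕ):ℝ) := by
    have := congrArg (Nat.cast (R := ℝ)) (choose_pp hk2 hkp)
    push_cast [Nat.cast_sub (show 1 ≤ p by omega), Nat.cast_sub (show 1 ≤ k by omega)] at this
    convert this using 2 <;> push_cast <;> ring
  have hpk : (0:ℝ) < (p.choose k : ℝ) := by exact_mod_cast Nat.choose_pos hkp
  have hp0 : (0:ℝ) < (p:ℝ) := by exact_mod_cast (show 0 < p by omega)
  have hp1 : (0:ℝ) < (p:ℝ) - 1 := by
    have : (1:ℝ) < (p:ℝ) := by exact_mod_cast (show 1 < p by omega)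
    linarith
  push_cast [Nat.cast_sub hmp.le]
  rw [div_eq_div_iff hpk.ne' (by positivity)]
  linear_combination ((m:ℝ)*((p:ℝ)-(m:ℝ))) * hcast

theorem stein_core {p k m : ℕ} (hk2 : 2 ≤ k) (hkp : k ≤ p) (hm0 : 0 < m) (hmp : m < p)
    (A : Finset ℕ) (hA : A ⊆ Finset.range (k+1)) :
    ∑ i ∈ A, (Hh p k m i - Bb ((m:ℝ)/(p:ℝ)) k i) ≤ ((k:ℝ)-1)/((p:ℝ)-1) := by
  have hp2 : 2 ≤ p := le_trans hk2 hkp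
  have hp0 : (0:ℝ) < (p:ℝ) := by exact_mod_cast (show 0 < p by omega)
  set q : ℝ := (m:ℝ)/(p:ℝ) with hqdef
  have hq0 : 0 < q := by
    rw [hqdef]
    apply div_pos _ hp0
    exact_mod_cast hm0
  have hq1 : q < 1 := by
    rw [hqdef, div_lt_one hp0]
    exact_mod_cast hmp
  have hk1 : 1 ≤ k := by omega
  have hkR : (0:ℝ) < (k:ℝ) := by exact_mod_cast (show 0 < k by omega)
  have h1q : (0:ℝ) < 1 - q := by linarith
  set f : ℕ → ℝ := fun i => ∑ j ∈ A, gg q k j i with hfdef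
  set BA : ℝ := ∑ j ∈ A, Bb q k j with hBAdef
  have hstein : ∀ i, i ≤ k → ((k:ℝ)-(i:ℝ))*q*f (i+1) - (i:ℝ)*(1-q)*f i
      = (if i ∈ A then (1:ℝ) else 0) - BA := by
    intro i hik
    have hexp : ((k:ℝ)-(i:ℝ))*q*f (i+1) - (i:ℝ)*(1-q)*f i
        = ∑ j ∈ A, (((k:ℝ)-(i:ℝ))*q*gg q k j (i+1) - (i:ℝ)*(1-q)*gg q k j i) := by
      rw [hfdef]
      simp only
      rw [Finset.mul_sum, Finset.mul_sum, ← Finset.sum_sub_distrib]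
    rw [hexp]
    have hterm : ∀ j ∈ A, (((k:ℝ)-(i:ℝ))*q*gg q k j (i+1) - (i:ℝ)*(1-q)*gg q k j i)
        = (if i = j then (1:ℝ) else 0) - Bb q k j := by
      intro j hj
      exact ggG1 hq0 hq1 hik (by have := Finset.mem_range.1 (hA hj); omega)
    rw [Finset.sum_congr rfl hterm, Finset.sum_sub_distrib, ← hBAdef]
    congr 1
    exact Finset.sum_ite_eq A i (fun _ => (1:ℝ))
  have hHsum : ∑ i ∈ Finset.range (k+1), Hh p k m i = 1 := Hh_sum hkp hmp.le
  have hstep1 : ∑ i ∈ A, (Hh p k m i - Bb q k i)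
      = ∑ i ∈ Finset.range (k+1), Hh p k m i * ((if i ∈ A then (1:ℝ) else 0) - BA) := by
    have h1 : ∑ i ∈ Finset.range (k+1), Hh p k m i * ((if i ∈ A then (1:ℝ) else 0) - BA)
        = (∑ i ∈ Finset.range (k+1), Hh p k m i * (if i ∈ A then (1:ℝ) else 0))
          - (∑ i ∈ Finset.range (k+1), Hh p k m i) * BA := by
      rw [Finset.sum_mul, ← Finset.sum_sub_distrib]
      exact Finset.sum_congr rfl fun i _ => by ring
    have h2 : ∑ i ∈ Finset.range (k+1), Hh p k m i * (if i ∈ A then (1:ℝ) else 0)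
        = ∑ i ∈ A, Hh p k m i := by
      have : ∀ i ∈ Finset.range (k+1), Hh p k m i * (if i ∈ A then (1:ℝ) else 0)
          = (if i ∈ A then Hh p k m i else 0) := by
        intro i _
        by_cases h : i ∈ A <;> simp [h]
      rw [Finset.sum_congr rfl this, Finset.sum_ite_mem, Finset.inter_eq_right.mpr hA]
    rw [h1, h2, hHsum, one_mul, hBAdef, Finset.sum_sub_distrib]
  have hCP : (0:ℝ) < ((p.choose k : ℕ) : ℝ) := by exact_mod_cast Nat.choose_pos hkp
  have hiden : ∀ i ∈ Finset.range (k+1),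
      Hh p k m i * ((if i ∈ A then (1:ℝ) else 0) - BA)
        = (((aa p k m i : ℕ):ℝ) * f (i+1) - ((bb p k m i : ℕ):ℝ) * f i)
            / (((p.choose k : ℕ):ℝ) * (p:ℝ))
          + ((i:ℝ)*((k:ℝ)-(i:ℝ))/(p:ℝ)) * Hh p k m i * (f (i+1) - f i) := by
    intro i hi
    have hik : i ≤ k := by have := Finset.mem_range.1 hi; omega
    rw [← hstein i hik]
    have ha := aa_cast (p := p) (m := m) hik
    have hb := bb_cast (p := p) (m := m) hik hmp.le
    have e1 : ((aa p k m i:ℕ):ℝ) = ((k:ℝ)-(i:ℝ))*((m:ℝ)-(i:ℝ))*Hh p k m i * ((p.choose k:ℕ):ℝ) :=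
      (div_eq_iff hCP.ne').1 ha
    have e2 : ((bb p k m i:ℕ):ℝ)
        = (i:ℝ)*(((p:ℝ)-(m:ℝ))-((k:ℝ)-(i:ℝ)))*Hh p k m i * ((p.choose k:ℕ):ℝ) :=
      (div_eq_iff hCP.ne').1 hb
    rw [e1, e2, hqdef]
    field_simp
    ring
  rw [hstep1, Finset.sum_congr rfl hiden, Finset.sum_add_distrib]
  have htel : ∑ i ∈ Finset.range (k+1),
      ((((aa p k m i:ℕ):ℝ) * f (i+1) - ((bb p k m i:ℕ):ℝ) * f i)
        / (((p.choose k:ℕ):ℝ)*(p:ℝ))) = 0 := by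
    rw [← Finset.sum_div, hyper_telescope p k m f, zero_div]
  rw [htel, zero_add]
  have hbndterm : ∀ i ∈ Finset.range (k+1),
      ((i:ℝ)*((k:ℝ)-(i:ℝ))/(p:ℝ)) * Hh p k m i * (f (i+1) - f i)
        ≤ ((i:ℝ)*((k:ℝ)-(i:ℝ))/(p:ℝ)) * Hh p k m i * (1/((k:ℝ)*q*(1-q))) := by
    intro i hi
    have hik : i ≤ k := by have := Finset.mem_range.1 hi; omega
    rcases Nat.eq_zero_or_pos i with rfl | hi0
    · simp
    rcases eq_or_lt_of_le hik with rfl | hikk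
    · simp
    · have hd := gg_delta_abs hq0 hq1 hi0 (by omega : i ≤ k-1) hk1 A hA
      have habs : f (i+1) - f i ≤ 1/((k:ℝ)*q*(1-q)) := by
        have := (abs_le.1 hd).2
        rw [hfdef]
        simpa using this
      have hc : (0:ℝ) ≤ ((i:ℝ)*((k:ℝ)-(i:ℝ))/(p:ℝ)) * Hh p k m i := by
        have h1 : (0:ℝ) ≤ (i:ℝ) := by positivity
        have h2 : (0:ℝ) ≤ (k:ℝ)-(i:ℝ) := by
          have : (i:ℝ) ≤ (k:ℝ) := by exact_mod_cast hik
          linarith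
        have h3 := Hh_nonneg p k m i
        have h4 : (0:ℝ) ≤ (i:ℝ)*((k:ℝ)-(i:ℝ))/(p:ℝ) := by positivity
        exact mul_nonneg h4 h3
      exact mul_le_mul_of_nonneg_left habs hc
  refine le_trans (Finset.sum_le_sum hbndterm) ?_
  have hfac : ∑ i ∈ Finset.range (k+1),
      (((i:ℝ)*((k:ℝ)-(i:ℝ))/(p:ℝ)) * Hh p k m i * (1/((k:ℝ)*q*(1-q))))
      = (1/((p:ℝ)*((k:ℝ)*q*(1-q)))) * ∑ i ∈ Finset.range (k+1), (i:ℝ)*((k:ℝ)-(i:ℝ))*Hh p k m i := by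
    rw [Finset.mul_sum]
    refine Finset.sum_congr rfl fun i _ => ?_
    have hkq : (k:ℝ)*q*(1-q) ≠ 0 := by positivity
    field_simp
  rw [hfac, moment_real hm0 hmp hk2 hkp]
  apply le_of_eq
  have hmR : (0:ℝ) < (m:ℝ) := by exact_mod_cast hm0
  have hpm : (0:ℝ) < (p:ℝ) - (m:ℝ) := by
    have : (m:ℝ) < (p:ℝ) := by exact_mod_cast hmp
    linarith
  have hp1 : (0:ℝ) < (p:ℝ) - 1 := by
    have : (1:ℝ) < (p:ℝ) := by exact_mod_cast (show 1 < p by omega)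
    linarith
  rw [hqdef]
  field_simp

lemma tv_half {p k m : ℕ} (hk2 : 2 ≤ k) (hkp : k ≤ p) (hm0 : 0 < m) (hmp : m < p) :
    (1/2) * ∑ i ∈ Finset.range (k+1), |Hh p k m i - Bb ((m:ℝ)/(p:ℝ)) k i|
      ≤ ((k:ℝ)-1)/((p:ℝ)-1) := by
  set q : ℝ := (m:ℝ)/(p:ℝ) with hqdef
  set d : ℕ → ℝ := fun i => Hh p k m i - Bb q k i with hddef
  have hB1 : ∑ i ∈ Finset.range (k+1), Bb q k i = 1 := Bb_sum q k
  have hzero : ∑ i ∈ Finset.range (k+1), d i = 0 := by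
    rw [hddef]
    simp only
    rw [Finset.sum_sub_distrib, Hh_sum hkp hmp.le, hB1, sub_self]
  set A : Finset ℕ := (Finset.range (k+1)).filter (fun i => 0 ≤ d i) with hAdef
  have habs : ∑ i ∈ Finset.range (k+1), |d i| = 2 * ∑ i ∈ A, d i := by
    rw [← Finset.sum_filter_add_sum_filter_not (Finset.range (k+1)) (fun i => 0 ≤ d i)
      (fun i => |d i|)]
    have h1 : ∑ i ∈ (Finset.range (k+1)).filter (fun i => 0 ≤ d i), |d i| = ∑ i ∈ A, d i :=
      Finset.sum_congr rfl fun i hi => abs_of_nonneg (Finset.mem_filter.1 hi).2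
    have h2 : ∑ i ∈ (Finset.range (k+1)).filter (fun i => ¬ 0 ≤ d i), |d i|
        = - ∑ i ∈ (Finset.range (k+1)).filter (fun i => ¬ 0 ≤ d i), d i := by
      rw [← Finset.sum_neg_distrib]
      exact Finset.sum_congr rfl fun i hi => abs_of_neg (lt_of_not_ge (Finset.mem_filter.1 hi).2)
    have h3 : ∑ i ∈ A, d i + ∑ i ∈ (Finset.range (k+1)).filter (fun i => ¬ 0 ≤ d i), d i = 0 := by
      rw [hAdef, Finset.sum_filter_add_sum_filter_not]
      exact hzero
    rw [h1, h2]
    linarith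
  rw [habs]
  have hcore := stein_core hk2 hkp hm0 hmp A (Finset.filter_subset _ _)
  calc (1/2) * (2 * ∑ i ∈ A, d i) = ∑ i ∈ A, d i := by ring
    _ ≤ ((k:ℝ)-1)/((p:ℝ)-1) := hcore

end HypBinTV

/- STATEMENT 6: The total variation distance between Hypergeometric(k, m, p) and
Binomial(k, m/p) is at most (k-1)/(p-1). -/
theorem hypergeometric_binomial_tv
    (p k m : ℕ) (hk1 : 1 ≤ k) (hk : k ≤ p) (hm : m ≤ p) :
    (1 / 2) * ∑ i ∈ Finset.range (k + 1),
        |((m.choose i * (p - m).choose (k - i) : ℕ) : ℝ) / (p.choose k : ℝ)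
          - (k.choose i : ℝ) * ((m : ℝ) / p) ^ i * (1 - (m : ℝ) / p) ^ (k - i)|
      ≤ ((k : ℝ) - 1) / ((p : ℝ) - 1) := by
  show (1/2) * ∑ i ∈ Finset.range (k+1),
      |HypBinTV.Hh p k m i - HypBinTV.Bb ((m:ℝ)/(p:ℝ)) k i| ≤ ((k:ℝ)-1)/((p:ℝ)-1)
  rcases eq_or_lt_of_le hk1 with hke | hk2
  · -- k = 1
    subst hke
    have hp0 : (0:ℝ) < (p:ℝ) := by exact_mod_cast (show 0 < p by omega)
    have h0 : HypBinTV.Hh p 1 m 0 - HypBinTV.Bb ((m:ℝ)/(p:ℝ)) 1 0 = 0 := by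
      unfold HypBinTV.Hh HypBinTV.Bb
      simp only [Nat.choose_zero_right, Nat.choose_one_right, Nat.sub_zero, one_mul, pow_zero,
        Nat.choose_self, pow_one, Nat.cast_one]
      push_cast [Nat.cast_sub hm]
      field_simp
      ring
    have h1t : HypBinTV.Hh p 1 m 1 - HypBinTV.Bb ((m:ℝ)/(p:ℝ)) 1 1 = 0 := by
      unfold HypBinTV.Hh HypBinTV.Bb
      simp only [Nat.choose_one_right, Nat.sub_self, Nat.choose_zero_right, mul_one, pow_one,
        pow_zero, Nat.choose_self, Nat.cast_one, one_mul]
      field_simp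
      ring
    rw [Finset.sum_range_succ, Finset.sum_range_one, h0, h1t, abs_zero, add_zero]
    have hp1 : (0:ℝ) ≤ (p:ℝ) - 1 := by
      have : (1:ℝ) ≤ (p:ℝ) := by exact_mod_cast (show 1 ≤ p by omega)
      linarith
    simp only [Nat.cast_one, sub_self, zero_div, mul_zero, le_refl]
  · -- 2 ≤ k
    have hk2' : 2 ≤ k := hk2
    have hp2 : 2 ≤ p := le_trans hk2' hk
    have hrhs : (0:ℝ) ≤ ((k:ℝ)-1)/((p:ℝ)-1) := by
      have h1 : (1:ℝ) ≤ (k:ℝ) := by exact_mod_cast (show 1 ≤ k by omega)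
      have h2 : (1:ℝ) < (p:ℝ) := by exact_mod_cast (show 1 < p by omega)
      apply div_nonneg <;> linarith
    have hCP : (0:ℝ) < ((p.choose k : ℕ):ℝ) := by exact_mod_cast Nat.choose_pos hk
    rcases Nat.eq_zero_or_pos m with rfl | hm0
    · -- m = 0
      have hz : ∀ i ∈ Finset.range (k+1),
          |HypBinTV.Hh p k 0 i - HypBinTV.Bb (((0:ℕ):ℝ)/(p:ℝ)) k i| = 0 := by
        intro i hi
        have hq : ((0:ℕ):ℝ)/(p:ℝ) = 0 := by norm_num
        rw [hq]
        rcases Nat.eq_zero_or_pos i with rfl | hi0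
        · unfold HypBinTV.Hh HypBinTV.Bb
          simp only [Nat.choose_zero_right, Nat.sub_zero, one_mul, pow_zero, Nat.choose_self,
            Nat.cast_one, sub_zero, one_pow, mul_one]
          rw [div_self hCP.ne']
          simp
        · unfold HypBinTV.Hh HypBinTV.Bb
          rw [Nat.choose_eq_zero_of_lt hi0]
          rw [zero_pow hi0.ne']
          simp
      rw [Finset.sum_congr rfl hz]
      simpa using hrhs
    rcases eq_or_lt_of_le hm with rfl | hmp
    · -- m = p
      have hp0 : (0:ℝ) < (m:ℝ) := by exact_mod_cast hm0
      have hq : ((m:ℝ))/((m:ℝ)) = 1 := div_self hp0.ne'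
      have hz : ∀ i ∈ Finset.range (k+1),
          |HypBinTV.Hh m k m i - HypBinTV.Bb ((m:ℝ)/(m:ℝ)) k i| = 0 := by
        intro i hi
        have hik : i ≤ k := by have := Finset.mem_range.1 hi; omega
        rw [hq]
        rcases eq_or_lt_of_le hik with rfl | hik'
        · unfold HypBinTV.Hh HypBinTV.Bb
          simp only [Nat.sub_self, Nat.choose_zero_right, mul_one, Nat.choose_self, Nat.cast_one,
            one_pow, pow_zero, one_mul, sub_self]
          rw [div_self hCP.ne']
          simp
        · unfold HypBinTV.Hh HypBinTV.Bb
          rw [Nat.sub_self, Nat.choose_eq_zero_of_lt (show 0 < k - i by omega)]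
          rw [sub_self, zero_pow (show k - i ≠ 0 by omega)]
          simp
      rw [Finset.sum_congr rfl hz]
      simpa using hrhs
    · exact HypBinTV.tv_half hk2' hk hm0 hmp
end

section
/- Let p1, p2 ∈ [0,1] with Δ = p1 - p2, and let η = Δ²·ℓ·(ℓ+2). Then the total variation distance between Binomial(ℓ, p1) and Binomial(ℓ, p2) satisfies d_TV ≤ c·√η·(1 + √(2η))·e^{2η}, where c = (2π)^{1/4}·e^{1/24}·2^{-1/2}. In particular, if η = O(1) then d_TV = O(√η) = O(|Δ|·ℓ). -/
open Finset

noncomputable def binProb (ℓ i : ℕ) (p : ℝ) : ℝ :=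
  (ℓ.choose i : ℝ) * p ^ i * (1 - p) ^ (ℓ - i)

lemma binProb_nonneg (ℓ i : ℕ) {p : ℝ} (hp : p ∈ Set.Icc (0:ℝ) 1) :
    0 ≤ binProb ℓ i p := by
  have h1 := hp.1; have h2 := hp.2
  exact mul_nonneg (mul_nonneg (by positivity) (pow_nonneg h1 _))
    (pow_nonneg (by linarith) _)

lemma sum_binProb (ℓ : ℕ) (p : ℝ) : ∑ i ∈ range (ℓ+1), binProb ℓ i p = 1 := by
  have h := add_pow p (1 - p) ℓ
  rw [show p + (1 - p) = 1 by ring, one_pow] at h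
  rw [show (1:ℝ) = ∑ k ∈ range (ℓ+1), p ^ k * (1-p) ^ (ℓ-k) * (ℓ.choose k : ℝ) from h]
  exact sum_congr rfl fun i _ => by unfold binProb; ring

lemma binProb_succ_zero (ℓ : ℕ) (p : ℝ) :
    binProb (ℓ+1) 0 p = (1 - p) * binProb ℓ 0 p := by
  unfold binProb
  simp [pow_succ]
  ring

lemma binProb_succ_succ (ℓ j : ℕ) (p : ℝ) :
    binProb (ℓ+1) (j+1) p = (1 - p) * binProb ℓ (j+1) p + p * binProb ℓ j p := by
  unfold binProb
  have hc : (ℓ+1).choose (j+1) = ℓ.choose j + ℓ.choose (j+1) := Nat.choose_succ_succ ℓ j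
  rcases le_or_gt (j+1) ℓ with h | h
  · have e1 : ℓ + 1 - (j+1) = (ℓ - (j+1)) + 1 := by omega
    have e2 : ℓ - j = (ℓ - (j+1)) + 1 := by omega
    rw [hc, e1, e2]
    push_cast
    ring
  · have h1 : ℓ.choose (j+1) = 0 := Nat.choose_eq_zero_of_lt h
    have e1 : ℓ + 1 - (j+1) = 0 := by omega
    have e2 : ℓ - j = 0 := by omega
    rw [hc, h1, e1, e2]
    push_cast
    ring

lemma sum_shift (n : ℕ) (f : ℕ → ℝ) :
    ∑ i ∈ range (n+1), (if i = 0 then 0 else f (i-1)) = ∑ j ∈ range n, f j := by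
  rw [Finset.sum_range_succ']
  simp

lemma tv_binom (p1 p2 : ℝ) (hp1 : p1 ∈ Set.Icc (0:ℝ) 1) (hp2 : p2 ∈ Set.Icc (0:ℝ) 1) :
    ∀ ℓ : ℕ, ∑ i ∈ range (ℓ+1), |binProb ℓ i p1 - binProb ℓ i p2|
      ≤ 2 * ℓ * |p1 - p2| := by
  intro ℓ
  induction ℓ with
  | zero => simp [binProb]
  | succ ℓ ih =>
    have hΔ : (0:ℝ) ≤ |p1 - p2| := abs_nonneg _
    have h1p1 : (0:ℝ) ≤ 1 - p1 := by linarith [hp1.2]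
    have key : ∀ i, |binProb (ℓ+1) i p1 - binProb (ℓ+1) i p2| ≤
        ((1 - p1) * |binProb ℓ i p1 - binProb ℓ i p2| + |p1 - p2| * binProb ℓ i p2)
        + (if i = 0 then 0 else p1 * |binProb ℓ (i-1) p1 - binProb ℓ (i-1) p2|
            + |p1 - p2| * binProb ℓ (i-1) p2) := by
      intro i
      rcases i with _ | j
      · rw [binProb_succ_zero, binProb_succ_zero, if_pos rfl, add_zero]
        have heq : (1 - p1) * binProb ℓ 0 p1 - (1 - p2) * binProb ℓ 0 p2
            = (1 - p1) * (binProb ℓ 0 p1 - binProb ℓ 0 p2)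
              + (p2 - p1) * binProb ℓ 0 p2 := by ring
        rw [heq]
        refine (abs_add_le _ _).trans ?_
        have e1 : |(1 - p1) * (binProb ℓ 0 p1 - binProb ℓ 0 p2)|
            = (1 - p1) * |binProb ℓ 0 p1 - binProb ℓ 0 p2| := by
          rw [abs_mul, abs_of_nonneg h1p1]
        have e2 : |(p2 - p1) * binProb ℓ 0 p2| = |p1 - p2| * binProb ℓ 0 p2 := by
          rw [abs_mul, abs_of_nonneg (binProb_nonneg ℓ 0 hp2), abs_sub_comm]
        rw [e1, e2]
      · rw [binProb_succ_succ, binProb_succ_succ, if_neg (Nat.succ_ne_zero j)]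
        simp only [Nat.add_sub_cancel]
        have heq : (1 - p1) * binProb ℓ (j+1) p1 + p1 * binProb ℓ j p1
            - ((1 - p2) * binProb ℓ (j+1) p2 + p2 * binProb ℓ j p2)
            = ((1 - p1) * (binProb ℓ (j+1) p1 - binProb ℓ (j+1) p2)
              + (p2 - p1) * binProb ℓ (j+1) p2)
              + (p1 * (binProb ℓ j p1 - binProb ℓ j p2)
              + (p1 - p2) * binProb ℓ j p2) := by ring
        rw [heq]
        refine (abs_add_le _ _).trans ?_
        gcongr
        · refine (abs_add_le _ _).trans ?_
          have e1 : |(1 - p1) * (binProb ℓ (j+1) p1 - binProb ℓ (j+1) p2)|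
              = (1 - p1) * |binProb ℓ (j+1) p1 - binProb ℓ (j+1) p2| := by
            rw [abs_mul, abs_of_nonneg h1p1]
          have e2 : |(p2 - p1) * binProb ℓ (j+1) p2| = |p1 - p2| * binProb ℓ (j+1) p2 := by
            rw [abs_mul, abs_of_nonneg (binProb_nonneg ℓ (j+1) hp2), abs_sub_comm]
          rw [e1, e2]
        · refine (abs_add_le _ _).trans ?_
          have e1 : |p1 * (binProb ℓ j p1 - binProb ℓ j p2)|
              = p1 * |binProb ℓ j p1 - binProb ℓ j p2| := by
            rw [abs_mul, abs_of_nonneg hp1.1]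
          have e2 : |(p1 - p2) * binProb ℓ j p2|
              = |p1 - p2| * binProb ℓ j p2 := by
            rw [abs_mul, abs_of_nonneg (binProb_nonneg ℓ j hp2)]
          rw [e1, e2]
    calc ∑ i ∈ range (ℓ+2), |binProb (ℓ+1) i p1 - binProb (ℓ+1) i p2|
        ≤ ∑ i ∈ range (ℓ+2),
            (((1 - p1) * |binProb ℓ i p1 - binProb ℓ i p2| + |p1 - p2| * binProb ℓ i p2)
            + (if i = 0 then 0 else p1 * |binProb ℓ (i-1) p1 - binProb ℓ (i-1) p2|
                + |p1 - p2| * binProb ℓ (i-1) p2)) :=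
          sum_le_sum fun i _ => key i
      _ = (∑ i ∈ range (ℓ+2),
            ((1 - p1) * |binProb ℓ i p1 - binProb ℓ i p2| + |p1 - p2| * binProb ℓ i p2))
          + ∑ i ∈ range (ℓ+2),
            (if i = 0 then 0 else p1 * |binProb ℓ (i-1) p1 - binProb ℓ (i-1) p2|
                + |p1 - p2| * binProb ℓ (i-1) p2) := sum_add_distrib
      _ = ((1 - p1) * ∑ i ∈ range (ℓ+1), |binProb ℓ i p1 - binProb ℓ i p2|
            + |p1 - p2| * 1)
          + (p1 * ∑ i ∈ range (ℓ+1), |binProb ℓ i p1 - binProb ℓ i p2|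
            + |p1 - p2| * 1) := by
          congr 1
          · rw [Finset.sum_range_succ]
            have hz1 : binProb ℓ (ℓ+1) p1 = 0 := by
              simp [binProb, Nat.choose_succ_self]
            have hz2 : binProb ℓ (ℓ+1) p2 = 0 := by
              simp [binProb, Nat.choose_succ_self]
            rw [hz1, hz2]
            simp only [sub_zero, abs_zero, mul_zero, add_zero]
            rw [← sum_binProb ℓ p2, Finset.sum_add_distrib, ← Finset.mul_sum,
              ← Finset.mul_sum]
          · rw [sum_shift (ℓ+1)
              (fun j => p1 * |binProb ℓ j p1 - binProb ℓ j p2|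
                + |p1 - p2| * binProb ℓ j p2)]
            rw [← sum_binProb ℓ p2, Finset.sum_add_distrib, ← Finset.mul_sum,
              ← Finset.mul_sum]
      _ ≤ 2 * ((ℓ+1 : ℕ) : ℝ) * |p1 - p2| := by
          have hD0 : (0:ℝ) ≤ ∑ i ∈ range (ℓ+1), |binProb ℓ i p1 - binProb ℓ i p2| :=
            sum_nonneg fun i _ => abs_nonneg _
          push_cast
          nlinarith [hp1.1, hp1.2]

open Real in
/- STATEMENT 8: Roos bound: for p1, p2 ∈ [0,1] with Δ = p1 - p2 and η = Δ²ℓ(ℓ+2),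
d_TV(Bin(ℓ,p1), Bin(ℓ,p2)) ≤ c √η (1 + √(2η)) e^{2η} with c = (2π)^{1/4} e^{1/24} 2^{-1/2}. -/
theorem roos_binomial_tv
    (ℓ : ℕ) (p1 p2 : ℝ)
    (hp1 : p1 ∈ Set.Icc (0 : ℝ) 1) (hp2 : p2 ∈ Set.Icc (0 : ℝ) 1) :
    (1 / 2) * ∑ i ∈ Finset.range (ℓ + 1),
        |(ℓ.choose i : ℝ) * p1 ^ i * (1 - p1) ^ (ℓ - i)
          - (ℓ.choose i : ℝ) * p2 ^ i * (1 - p2) ^ (ℓ - i)|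
      ≤ ((2 * π) ^ ((1 : ℝ) / 4) * Real.exp (1 / 24) * 2 ^ (-(1 : ℝ) / 2))
          * Real.sqrt ((p1 - p2) ^ 2 * ℓ * (ℓ + 2))
          * (1 + Real.sqrt (2 * ((p1 - p2) ^ 2 * ℓ * (ℓ + 2))))
          * Real.exp (2 * ((p1 - p2) ^ 2 * ℓ * (ℓ + 2))) := by
  have htv := tv_binom p1 p2 hp1 hp2 ℓ
  have hL : (1 / 2 : ℝ) * ∑ i ∈ Finset.range (ℓ + 1),
        |(ℓ.choose i : ℝ) * p1 ^ i * (1 - p1) ^ (ℓ - i)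
          - (ℓ.choose i : ℝ) * p2 ^ i * (1 - p2) ^ (ℓ - i)|
      ≤ (ℓ : ℝ) * |p1 - p2| := by
    unfold binProb at htv
    linarith
  set r : ℝ := (p1 - p2) ^ 2 * ℓ * (ℓ + 2) with hr
  have hr0 : 0 ≤ r := by positivity
  have hsq : (ℓ : ℝ) * |p1 - p2| ≤ Real.sqrt r := by
    have h1 : ((p1 - p2) * ℓ) ^ 2 ≤ r := by
      rw [hr]
      have : (0:ℝ) ≤ (ℓ:ℝ) := Nat.cast_nonneg ℓ
      nlinarith [sq_nonneg (p1 - p2)]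
    calc (ℓ : ℝ) * |p1 - p2| = |(p1 - p2) * ℓ| := by
          rw [abs_mul, abs_of_nonneg (Nat.cast_nonneg ℓ : (0:ℝ) ≤ ℓ)]; ring
      _ = Real.sqrt (((p1 - p2) * ℓ) ^ 2) := (Real.sqrt_sq_eq_abs _).symm
      _ ≤ Real.sqrt r := Real.sqrt_le_sqrt h1
  have hA : (1:ℝ) ≤ (2 * π) ^ ((1 : ℝ) / 4) * Real.exp (1 / 24) * 2 ^ (-(1 : ℝ) / 2) := by
    have hpi : (4:ℝ) ≤ 2 * π := by nlinarith [Real.pi_gt_three]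
    have h4 : (4:ℝ) ^ ((1:ℝ)/4) ≤ (2 * π) ^ ((1:ℝ)/4) :=
      Real.rpow_le_rpow (by norm_num) hpi (by norm_num)
    have h4e : (4:ℝ) ^ ((1:ℝ)/4) = 2 ^ ((1:ℝ)/2) := by
      rw [show (4:ℝ) = 2 ^ (2:ℝ) by
          rw [show (2:ℝ) = ((2:ℕ):ℝ) by norm_num, Real.rpow_natCast]; norm_num,
        ← Real.rpow_mul (by norm_num)]
      norm_num
    have hexp : (1:ℝ) ≤ Real.exp (1/24) := Real.one_le_exp (by norm_num)
    have hbase : (0:ℝ) < 2 ^ (-(1:ℝ)/2) := Real.rpow_pos_of_pos (by norm_num) _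
    have h2 : (2:ℝ) ^ ((1:ℝ)/2) * 2 ^ (-(1:ℝ)/2) = 1 := by
      rw [← Real.rpow_add (by norm_num)]
      norm_num
    calc (1:ℝ) = 2 ^ ((1:ℝ)/2) * 1 * 2 ^ (-(1:ℝ)/2) := by rw [mul_one, h2]
      _ ≤ (2 * π) ^ ((1:ℝ)/4) * Real.exp (1/24) * 2 ^ (-(1:ℝ)/2) := by
          have := h4e ▸ h4
          gcongr
  have h1r : (1:ℝ) ≤ 1 + Real.sqrt (2 * r) := le_add_of_nonneg_right (Real.sqrt_nonneg _)
  have hexp2 : (1:ℝ) ≤ Real.exp (2 * r) := Real.one_le_exp (by positivity)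
  calc (1 / 2 : ℝ) * ∑ i ∈ Finset.range (ℓ + 1),
        |(ℓ.choose i : ℝ) * p1 ^ i * (1 - p1) ^ (ℓ - i)
          - (ℓ.choose i : ℝ) * p2 ^ i * (1 - p2) ^ (ℓ - i)|
      ≤ (ℓ : ℝ) * |p1 - p2| := hL
    _ ≤ Real.sqrt r := hsq
    _ = 1 * Real.sqrt r * 1 * 1 := by ring
    _ ≤ ((2 * π) ^ ((1 : ℝ) / 4) * Real.exp (1 / 24) * 2 ^ (-(1 : ℝ) / 2))
          * Real.sqrt r * (1 + Real.sqrt (2 * r)) * Real.exp (2 * r) := by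
        gcongr
end

section
/- Let S be uniformly distributed over the C(p,k) subsets of {1,...,p} of size k, and let the observation vector Y = (Y^(1),...,Y^(n)) be generated conditionally independently given S via a fixed measurement matrix. For any estimator Ŝ of S from Y, and any auxiliary output distribution Q_Y on {0,1}, the error probability satisfies P[Ŝ ≠ S] ≥ Σ_s (1/C(p,k)) · P[ Σ_{i=1}^n log( P(Y^(i)|X_s^(i)) / Q_Y(Y^(i)) ) ≤ log C(p,k) + log δ | S = s ] − δ, for every δ > 0. -/
/- STATEMENT 9: Non-asymptotic change-of-measure converse bound for group testing.
S is uniform over the C(p,k) subsets of {1,...,p} of size k; given S = s the n tests are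
conditionally independent with per-test observation distribution W i s (·) (incorporating
the fixed measurement matrix); est is any estimator of S from the observations; Q is an
arbitrary auxiliary output distribution on {0,1}.  Then for every δ > 0,
P[Ŝ ≠ S] ≥ ∑_s (1/C(p,k)) P[∑_i log(W(Y_i|s)/Q(Y_i)) ≤ log C(p,k) + log δ | S = s] − δ. -/
theorem group_testing_converse_bound
    (p k n : ℕ) (hk : k ≤ p)
    (W : Fin n → Finset (Fin p) → Bool → ℝ)
    (Q : Bool → ℝ)
    (hW0 : ∀ i s y, 0 ≤ W i s y) (hW1 : ∀ i s, ∑ y, W i s y = 1)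
    (hQ0 : ∀ y, 0 < Q y) (hQ1 : ∑ y, Q y = 1)
    (est : (Fin n → Bool) → Finset (Fin p))
    (δ : ℝ) (hδ : 0 < δ) :
    ∑ s ∈ Finset.univ.powersetCard k, (1 / (p.choose k : ℝ)) *
        ∑ y : Fin n → Bool, (∏ i, W i s (y i)) * (if est y ≠ s then 1 else 0)
      ≥ (∑ s ∈ Finset.univ.powersetCard k, (1 / (p.choose k : ℝ)) *
          ∑ y : Fin n → Bool, (∏ i, W i s (y i)) *
            (if (∑ i, Real.log (W i s (y i) / Q (y i)))
                ≤ Real.log (p.choose k : ℝ) + Real.log δ then 1 else 0))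
        - δ := by
  classical
  have hM : (0:ℝ) < (p.choose k : ℝ) := by exact_mod_cast Nat.choose_pos hk
  set M : ℝ := (p.choose k : ℝ) with hMdef
  have hMne : M ≠ 0 := hM.ne'
  rw [ge_iff_le, sub_le_iff_le_add]
  have hQprod : ∀ y : Fin n → Bool, (0:ℝ) < ∏ i, Q (y i) :=
    fun y => Finset.prod_pos fun i _ => hQ0 _
  -- pointwise bound
  have key : ∀ s ∈ Finset.univ.powersetCard k, ∀ y : Fin n → Bool,
      (∏ i, W i s (y i)) *
          (if (∑ i, Real.log (W i s (y i) / Q (y i)))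
              ≤ Real.log M + Real.log δ then 1 else 0)
        ≤ (∏ i, W i s (y i)) * (if est y ≠ s then 1 else 0)
          + M * δ * ((∏ i, Q (y i)) * (if s = est y then 1 else 0)) := by
    intro s _ y
    have hWprod : (0:ℝ) ≤ ∏ i, W i s (y i) :=
      Finset.prod_nonneg fun i _ => hW0 _ _ _
    by_cases hne : est y = s
    · -- correct decoding: error indicator 0, extra term present
      rw [if_neg (show ¬ est y ≠ s from not_not_intro hne), if_pos hne.symm,
        mul_zero, zero_add, mul_one]
      by_cases hA : (∑ i, Real.log (W i s (y i) / Q (y i)))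
          ≤ Real.log M + Real.log δ
      · rw [if_pos hA, mul_one]
        by_cases hz : ∃ i, W i s (y i) = 0
        · obtain ⟨i, hi⟩ := hz
          rw [Finset.prod_eq_zero (Finset.mem_univ i) hi]
          exact mul_nonneg (mul_nonneg hM.le hδ.le) (hQprod y).le
        · push_neg at hz
          have hWpos : ∀ i, 0 < W i s (y i) := fun i =>
            lt_of_le_of_ne (hW0 _ _ _) (Ne.symm (hz i))
          have hsum : (∑ i, Real.log (W i s (y i) / Q (y i)))
              = Real.log ((∏ i, W i s (y i)) / ∏ i, Q (y i)) := by
            rw [← Finset.prod_div_distrib, ← Real.log_prod]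
            intro i _
            exact div_ne_zero (hWpos i).ne' (hQ0 _).ne'
          have hMδ : Real.log M + Real.log δ = Real.log (M * δ) :=
            (Real.log_mul hM.ne' hδ.ne').symm
          rw [hsum, hMδ] at hA
          have hpos : 0 < (∏ i, W i s (y i)) / ∏ i, Q (y i) :=
            div_pos (Finset.prod_pos fun i _ => hWpos i) (hQprod y)
          have hle : (∏ i, W i s (y i)) / ∏ i, Q (y i) ≤ M * δ :=
            (Real.log_le_log_iff hpos (by positivity)).mp hA
          have h := (div_le_iff₀ (hQprod y)).mp hle
          nlinarith [h]
      · rw [if_neg hA, mul_zero]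
        exact mul_nonneg (mul_nonneg hM.le hδ.le) (hQprod y).le
    · -- error event
      have e1 : (if est y ≠ s then (1:ℝ) else 0) = 1 := if_pos hne
      have e2 : (if s = est y then (1:ℝ) else 0) = 0 :=
        if_neg (fun h => hne h.symm)
      rw [e1, e2, mul_zero, mul_zero, add_zero, mul_one]
      have hind : (if (∑ i, Real.log (W i s (y i) / Q (y i)))
          ≤ Real.log M + Real.log δ then (1:ℝ) else 0) ≤ 1 := by
        split_ifs <;> norm_num
      nlinarith [hind, hWprod]
  have hsum1 : (∑ y : Fin n → Bool, ∏ i, Q (y i)) = 1 := by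
    rw [← Fintype.prod_sum fun (_ : Fin n) (b : Bool) => Q b]
    simp only [hQ1, Finset.prod_const_one]
  calc ∑ s ∈ Finset.univ.powersetCard k, (1 / M) *
          ∑ y : Fin n → Bool, (∏ i, W i s (y i)) *
            (if (∑ i, Real.log (W i s (y i) / Q (y i)))
                ≤ Real.log M + Real.log δ then 1 else 0)
      ≤ ∑ s ∈ Finset.univ.powersetCard k, ((1 / M) *
          ∑ y : Fin n → Bool, (∏ i, W i s (y i)) * (if est y ≠ s then 1 else 0)
          + (1 / M) * ∑ y : Fin n → Bool,
              M * δ * ((∏ i, Q (y i)) * (if s = est y then 1 else 0))) := by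
        apply Finset.sum_le_sum
        intro s hs
        rw [← mul_add, ← Finset.sum_add_distrib]
        apply mul_le_mul_of_nonneg_left _ (by positivity)
        exact Finset.sum_le_sum fun y _ => key s hs y
    _ = (∑ s ∈ Finset.univ.powersetCard k, (1 / M) *
          ∑ y : Fin n → Bool, (∏ i, W i s (y i)) * (if est y ≠ s then 1 else 0))
          + δ * ∑ y : Fin n → Bool, (∏ i, Q (y i)) *
              ∑ s ∈ Finset.univ.powersetCard k, (if s = est y then 1 else 0) := by
        rw [Finset.sum_add_distrib]
        congr 1
        simp only [Finset.mul_sum]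
        rw [Finset.sum_comm]
        apply Finset.sum_congr rfl
        intro y _
        apply Finset.sum_congr rfl
        intro s _
        field_simp
    _ ≤ (∑ s ∈ Finset.univ.powersetCard k, (1 / M) *
          ∑ y : Fin n → Bool, (∏ i, W i s (y i)) * (if est y ≠ s then 1 else 0))
          + δ := by
        gcongr _ + ?_
        have hbound : (∑ y : Fin n → Bool, (∏ i, Q (y i)) *
              ∑ s ∈ Finset.univ.powersetCard k, (if s = est y then 1 else 0))
            ≤ ∑ y : Fin n → Bool, ∏ i, Q (y i) := by
          apply Finset.sum_le_sum
          intro y _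
          rw [Finset.sum_ite_eq']
          have h0 := (hQprod y).le
          split_ifs <;> simp [h0]
        calc δ * ∑ y : Fin n → Bool, (∏ i, Q (y i)) *
                ∑ s ∈ Finset.univ.powersetCard k, (if s = est y then 1 else 0)
            ≤ δ * ∑ y : Fin n → Bool, ∏ i, Q (y i) :=
              mul_le_mul_of_nonneg_left hbound hδ.le
          _ = δ := by rw [hsum1, mul_one]
end

section
/- Let S_dif and S_eq be as in the genie-aided group testing setup (S_eq uniform over (k−ℓ)-subsets of {1,...,p}, S_dif uniform over ℓ-subsets of the complement), and let Y = (Y^(1),...,Y^(n)) be conditionally independent observations given (S_dif, S_eq), with each Y^(i) depending on (S_dif, S_eq) only through the counts V_dif^(i) = Σ_{j∈S_dif} X_j^(i) and V_eq^(i) = Σ_{j∈S_eq} X_j^(i) for a fixed matrix X. Then I(S_dif; Y | S_eq) ≤ Σ_{i=1}^n I(V_dif^(i); Y^(i) | V_eq^(i)). -/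
/-- Conditional mutual information I(A;B|C) (in nats) of a joint pmf `q` on A × B × C:
∑ q(a,b,c) log( q(a,b,c) q(c) / (q(a,c) q(b,c)) ). -/
noncomputable def condMI {A B C : Type*} [Fintype A] [Fintype B] [Fintype C]
    (q : A → B → C → ℝ) : ℝ :=
  ∑ a, ∑ b, ∑ c, q a b c *
    Real.log (q a b c * (∑ a', ∑ b', q a' b' c)
      / ((∑ b', q a b' c) * (∑ a', q a' b c)))

/-- Prior of the genie-aided setup: (S_dif, S_eq) uniform over pairs of disjoint subsets of
{1,...,p} with |S_dif| = ℓ and |S_eq| = k − ℓ. -/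
noncomputable def genieP (p k ℓ : ℕ) (sd se : Finset (Fin p)) : ℝ :=
  if sd.card = ℓ ∧ se.card = k - ℓ ∧ Disjoint sd se then
    1 / ((p.choose (k - ℓ) : ℝ) * ((p - (k - ℓ)).choose ℓ : ℝ))
  else 0

/-- Joint pmf of (S_dif, Y, S_eq): the n tests are conditionally independent given the sets,
the i-th observation Y_i depending on them only through the counts
V_dif^(i) = ∑_{j∈S_dif} X_ij and V_eq^(i) = ∑_{j∈S_eq} X_ij, via the channel W i. -/
noncomputable def genieJoint (p k ℓ n : ℕ) (X : Fin n → Fin p → Bool)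
    (W : Fin n → ℕ → ℕ → Bool → ℝ)
    (sd : Finset (Fin p)) (y : Fin n → Bool) (se : Finset (Fin p)) : ℝ :=
  genieP p k ℓ sd se *
    ∏ i, W i ((sd.filter fun j => X i j = true).card)
            ((se.filter fun j => X i j = true).card) (y i)

/-- Joint pmf of (V_dif^(i), Y^(i), V_eq^(i)) for a single test i. -/
noncomputable def genieJointI (p k ℓ n : ℕ) (X : Fin n → Fin p → Bool)
    (W : Fin n → ℕ → ℕ → Bool → ℝ) (i : Fin n)
    (a : Fin (p + 1)) (y : Bool) (c : Fin (p + 1)) : ℝ :=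
  (∑ sd : Finset (Fin p), ∑ se : Finset (Fin p),
      if (sd.filter fun j => X i j = true).card = (a : ℕ)
          ∧ (se.filter fun j => X i j = true).card = (c : ℕ) then
        genieP p k ℓ sd se
      else 0)
    * W i (a : ℕ) (c : ℕ) y

private lemma klLemma {ι : Type*} [Fintype ι] (f g : ι → ℝ)
    (hf : ∀ x, 0 ≤ f x) (hg : ∀ x, 0 ≤ g x)
    (hfg : ∀ x, g x = 0 → f x = 0) (hsum : ∑ x, g x ≤ ∑ x, f x) :
    0 ≤ ∑ x, f x * Real.log (f x / g x) := by
  have key : ∀ x, f x - g x ≤ f x * Real.log (f x / g x) := by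
    intro x
    rcases eq_or_lt_of_le (hf x) with h | h
    · rw [← h]; simp; linarith [hg x]
    · have hgx : 0 < g x := by
        rcases eq_or_lt_of_le (hg x) with h' | h'
        · exact absurd (hfg x h'.symm) (by linarith)
        · exact h'
      have hlog : Real.log (g x / f x) ≤ g x / f x - 1 :=
        Real.log_le_sub_one_of_pos (div_pos hgx h)
      have hrw : Real.log (f x / g x) = - Real.log (g x / f x) := by
        rw [← Real.log_inv, inv_div]
      rw [hrw]
      have h2 := mul_le_mul_of_nonneg_left hlog (le_of_lt h)
      have hfx : f x ≠ 0 := ne_of_gt h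
      have h3 : f x * (g x / f x - 1) = g x - f x := by field_simp
      linarith
  calc (0:ℝ) ≤ ∑ x, f x - ∑ x, g x := by linarith
    _ = ∑ x, (f x - g x) := (Finset.sum_sub_distrib _ _).symm
    _ ≤ _ := Finset.sum_le_sum fun x _ => key x

private lemma sum_prod_eval {n : ℕ} (f : Fin n → Bool → ℝ)
    (hf : ∀ j, ∑ b, f j b = 1) (i : Fin n) (g : Bool → ℝ) :
    ∑ y : Fin n → Bool, (∏ j, f j (y j)) * g (y i) = ∑ b, f i b * g b := by
  have h1 : ∀ y : Fin n → Bool, (∏ j, f j (y j)) * g (y i)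
      = ∏ j, (f j (y j) * (if j = i then g (y j) else 1)) := by
    intro y
    rw [Finset.prod_mul_distrib, Finset.prod_ite_eq' Finset.univ i (fun j => g (y j)),
      if_pos (Finset.mem_univ i)]
  simp only [h1]
  have h2 : ∑ y : Fin n → Bool, ∏ j, (f j (y j) * (if j = i then g (y j) else 1))
      = ∏ j, ∑ b, (f j b * (if j = i then g b else 1)) := by
    rw [Finset.prod_univ_sum, Fintype.piFinset_univ]
  rw [h2]
  rw [Finset.prod_eq_single i]
  · simp
  · intro j _ hj
    simp [hj]; have := hf j; simp [Fintype.sum_bool] at this; linarith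
  · simp

private lemma sum_prod_one {n : ℕ} (f : Fin n → Bool → ℝ)
    (hf : ∀ j, ∑ b, f j b = 1) :
    ∑ y : Fin n → Bool, ∏ j, f j (y j) = 1 := by
  rw [← Fintype.piFinset_univ, ← Finset.prod_univ_sum]
  have : ∀ j, f j true + f j false = 1 := by
    intro j; have := hf j; simp [Fintype.sum_bool] at this; linarith
  simp [this]

private lemma grouping {A C A' C' : Type*} [Fintype A] [Fintype C] [Fintype A'] [Fintype C']
    [DecidableEq A'] [DecidableEq C']
    (P : A → C → ℝ) (φ : A → A') (ψ : C → C') (F : A' → C' → ℝ) :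
    ∑ a', ∑ c', (∑ a, ∑ c, if φ a = a' ∧ ψ c = c' then P a c else 0) * F a' c'
      = ∑ a, ∑ c, P a c * F (φ a) (ψ c) := by
  calc ∑ a', ∑ c', (∑ a, ∑ c, if φ a = a' ∧ ψ c = c' then P a c else 0) * F a' c'
      = ∑ a', ∑ c', ∑ a, ∑ c, (if φ a = a' ∧ ψ c = c' then P a c * F a' c' else 0) := by
        simp only [Finset.sum_mul, ite_mul, zero_mul]
    _ = ∑ a', ∑ a, ∑ c', ∑ c, (if φ a = a' ∧ ψ c = c' then P a c * F a' c' else 0) :=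
        Finset.sum_congr rfl fun a' _ => Finset.sum_comm
    _ = ∑ a, ∑ a', ∑ c', ∑ c, (if φ a = a' ∧ ψ c = c' then P a c * F a' c' else 0) :=
        Finset.sum_comm
    _ = ∑ a, ∑ a', ∑ c, ∑ c', (if φ a = a' ∧ ψ c = c' then P a c * F a' c' else 0) :=
        Finset.sum_congr rfl fun a _ => Finset.sum_congr rfl fun a' _ => Finset.sum_comm
    _ = ∑ a, ∑ c, ∑ a', ∑ c', (if φ a = a' ∧ ψ c = c' then P a c * F a' c' else 0) :=
        Finset.sum_congr rfl fun a _ => Finset.sum_comm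
    _ = ∑ a, ∑ c, P a c * F (φ a) (ψ c) := by
        refine Finset.sum_congr rfl fun a _ => Finset.sum_congr rfl fun c _ => ?_
        simp [ite_and, Finset.sum_ite_eq]

private lemma condMI_decomp {A B C : Type*} [Fintype A] [Fintype B] [Fintype C]
    (q : A → B → C → ℝ) (hq : ∀ a b c, 0 ≤ q a b c) :
    condMI q = (∑ a, ∑ b, ∑ c, q a b c * Real.log (q a b c / (∑ b', q a b' c)))
      + ∑ a, ∑ b, ∑ c, q a b c * Real.log ((∑ a', ∑ b', q a' b' c) / (∑ a', q a' b c)) := by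
  have key : ∀ a b c, q a b c *
      Real.log (q a b c * (∑ a', ∑ b', q a' b' c) / ((∑ b', q a b' c) * (∑ a', q a' b c)))
      = q a b c * Real.log (q a b c / (∑ b', q a b' c))
        + q a b c * Real.log ((∑ a', ∑ b', q a' b' c) / (∑ a', q a' b c)) := by
    intro a b c
    rcases eq_or_lt_of_le (hq a b c) with h | h
    · rw [← h]; ring
    · have hac : 0 < ∑ b', q a b' c :=
        lt_of_lt_of_le h (Finset.single_le_sum (fun b' _ => hq a b' c) (Finset.mem_univ b))
      have hbc : 0 < ∑ a', q a' b c :=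
        lt_of_lt_of_le h (Finset.single_le_sum (fun a' _ => hq a' b c) (Finset.mem_univ a))
      have hc : 0 < ∑ a', ∑ b', q a' b' c :=
        lt_of_lt_of_le hac (Finset.single_le_sum
          (f := fun a' => ∑ b', q a' b' c)
          (fun a' _ => Finset.sum_nonneg fun b' _ => hq a' b' c) (Finset.mem_univ a))
      rw [← div_mul_div_comm, Real.log_mul (ne_of_gt (div_pos h hac)) (ne_of_gt (div_pos hc hbc)),
        mul_add]
  unfold condMI
  simp only [key, Finset.sum_add_distrib]

private lemma main_aux {A C A' C' : Type*} [Fintype A] [Fintype C] [Fintype A'] [Fintype C']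
    [DecidableEq A'] [DecidableEq C'] {n : ℕ}
    (P : A → C → ℝ) (hP : ∀ a c, 0 ≤ P a c)
    (φ : Fin n → A → A') (ψ : Fin n → C → C')
    (W : Fin n → A' → C' → Bool → ℝ)
    (hW0 : ∀ i a c y, 0 ≤ W i a c y) (hW1 : ∀ i a c, ∑ y, W i a c y = 1)
    (Q : A → (Fin n → Bool) → C → ℝ)
    (hQ : ∀ a y c, Q a y c = P a c * ∏ i, W i (φ i a) (ψ i c) (y i))
    (M : Fin n → A' → C' → ℝ)
    (hM : ∀ i a' c', M i a' c' = ∑ a, ∑ c, if φ i a = a' ∧ ψ i c = c' then P a c else 0) :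
    condMI Q ≤ ∑ i, condMI (fun a' b c' => M i a' c' * W i a' c' b) := by
  have hWle : ∀ i a' c' b, W i a' c' b ≤ 1 := fun i a' c' b => by
    calc W i a' c' b ≤ ∑ y, W i a' c' y :=
          Finset.single_le_sum (fun y _ => hW0 i a' c' y) (Finset.mem_univ b)
      _ = 1 := hW1 i a' c'
  have hprodW0 : ∀ (a : A) (y : Fin n → Bool) (c : C), (0:ℝ) ≤ ∏ i, W i (φ i a) (ψ i c) (y i) :=
    fun a y c => Finset.prod_nonneg fun i _ => hW0 _ _ _ _
  have hQ0 : ∀ (a : A) (y : Fin n → Bool) (c : C), 0 ≤ Q a y c := fun a y c => by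
    rw [hQ]; exact mul_nonneg (hP a c) (hprodW0 a y c)
  have hQleP : ∀ (a : A) (y : Fin n → Bool) (c : C), Q a y c ≤ P a c := fun a y c => by
    rw [hQ]
    exact mul_le_of_le_one_right (hP a c)
      (Finset.prod_le_one (fun i _ => hW0 _ _ _ _) (fun i _ => hWle _ _ _ _))
  have hM0 : ∀ i a' c', 0 ≤ M i a' c' := fun i a' c' => by
    rw [hM]
    refine Finset.sum_nonneg fun a _ => Finset.sum_nonneg fun c _ => ?_
    split
    · exact hP a c
    · exact le_rfl
  have hqi0 : ∀ i a' b c', 0 ≤ M i a' c' * W i a' c' b :=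
    fun i a' b c' => mul_nonneg (hM0 i a' c') (hW0 _ _ _ _)
  have hPleM : ∀ i a c, P a c ≤ M i (φ i a) (ψ i c) := fun i a c => by
    rw [hM]
    have h1 : P a c ≤ ∑ c0, if φ i a = φ i a ∧ ψ i c0 = ψ i c then P a c0 else 0 := by
      have := Finset.single_le_sum
        (f := fun c0 => if φ i a = φ i a ∧ ψ i c0 = ψ i c then P a c0 else 0)
        (fun c0 _ => by split; exacts [hP a _, le_rfl]) (Finset.mem_univ c)
      simpa using this
    refine le_trans h1 (Finset.single_le_sum
      (f := fun a0 => ∑ c0, if φ i a0 = φ i a ∧ ψ i c0 = ψ i c then P a0 c0 else 0)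
      (fun a0 _ => Finset.sum_nonneg fun c0 _ => by split; exacts [hP a0 _, le_rfl])
      (Finset.mem_univ a))
  have mAC : ∀ (a : A) (c : C), ∑ y, Q a y c = P a c := fun a c => by
    simp only [hQ, ← Finset.mul_sum]
    rw [sum_prod_one _ (fun j => hW1 j _ _), mul_one]
  have mC : ∀ c, (∑ a, ∑ y, Q a y c) = ∑ a, P a c :=
    fun c => Finset.sum_congr rfl fun a _ => mAC a c
  have posQ : ∀ (a : A) (y : Fin n → Bool) (c : C), 0 < Q a y c → 0 < P a c ∧ ∀ i, 0 < W i (φ i a) (ψ i c) (y i) := by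
    intro a y c h
    rw [hQ] at h
    have hPac : 0 < P a c := by
      rcases eq_or_lt_of_le (hP a c) with h0 | h0
      · rw [← h0, zero_mul] at h; exact absurd h (lt_irrefl 0)
      · exact h0
    refine ⟨hPac, fun i => ?_⟩
    rcases eq_or_lt_of_le (hW0 i (φ i a) (ψ i c) (y i)) with h0 | h0
    · exfalso
      have hz : ∏ j, W j (φ j a) (ψ j c) (y j) = 0 :=
        Finset.prod_eq_zero (Finset.mem_univ i) h0.symm
      rw [hz, mul_zero] at h; exact lt_irrefl 0 h
    · exact h0
  have push : ∀ (i : Fin n) (G : Bool → C' → ℝ),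
      ∑ b, ∑ c', (∑ a', M i a' c' * W i a' c' b) * G b c'
        = ∑ y : Fin n → Bool, ∑ c, (∑ a, Q a y c) * G (y i) (ψ i c) := by
    intro i G
    have lhs_eq : ∑ b, ∑ c', (∑ a', M i a' c' * W i a' c' b) * G b c'
        = ∑ a', ∑ c', M i a' c' * ∑ b, W i a' c' b * G b c' := by
      rw [Finset.sum_comm]
      calc ∑ c', ∑ b, (∑ a', M i a' c' * W i a' c' b) * G b c'
          = ∑ c', ∑ b, ∑ a', M i a' c' * (W i a' c' b * G b c') := by
            refine Finset.sum_congr rfl fun c' _ => Finset.sum_congr rfl fun b _ => ?_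
            rw [Finset.sum_mul]
            exact Finset.sum_congr rfl fun a' _ => mul_assoc _ _ _
        _ = ∑ c', ∑ a', ∑ b, M i a' c' * (W i a' c' b * G b c') :=
            Finset.sum_congr rfl fun c' _ => Finset.sum_comm
        _ = ∑ a', ∑ c', ∑ b, M i a' c' * (W i a' c' b * G b c') := Finset.sum_comm
        _ = ∑ a', ∑ c', M i a' c' * ∑ b, W i a' c' b * G b c' := by
            refine Finset.sum_congr rfl fun a' _ => Finset.sum_congr rfl fun c' _ => ?_
            rw [Finset.mul_sum]
    have mid := grouping P (φ i) (ψ i) (fun a' c' => ∑ b, W i a' c' b * G b c')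
    simp only [← hM i] at mid
    have rhs_eq : ∑ y : Fin n → Bool, ∑ c, (∑ a, Q a y c) * G (y i) (ψ i c)
        = ∑ a, ∑ c, P a c * ∑ b, W i (φ i a) (ψ i c) b * G b (ψ i c) := by
      calc ∑ y : Fin n → Bool, ∑ c, (∑ a, Q a y c) * G (y i) (ψ i c)
          = ∑ y : Fin n → Bool, ∑ c, ∑ a, Q a y c * G (y i) (ψ i c) :=
            Finset.sum_congr rfl fun y _ => Finset.sum_congr rfl fun c _ =>
              Finset.sum_mul _ _ _
        _ = ∑ y : Fin n → Bool, ∑ a, ∑ c, Q a y c * G (y i) (ψ i c) :=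
            Finset.sum_congr rfl fun y _ => Finset.sum_comm
        _ = ∑ a, ∑ y : Fin n → Bool, ∑ c, Q a y c * G (y i) (ψ i c) := Finset.sum_comm
        _ = ∑ a, ∑ c, ∑ y : Fin n → Bool, Q a y c * G (y i) (ψ i c) :=
            Finset.sum_congr rfl fun a _ => Finset.sum_comm
        _ = ∑ a, ∑ c, P a c * ∑ b, W i (φ i a) (ψ i c) b * G b (ψ i c) := by
            refine Finset.sum_congr rfl fun a _ => Finset.sum_congr rfl fun c _ => ?_
            simp only [hQ, mul_assoc]
            rw [← Finset.mul_sum]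
            congr 1
            exact sum_prod_eval (fun j b => W j (φ j a) (ψ j c) b) (fun j => hW1 j _ _) i (fun b => G b (ψ i c))
    rw [lhs_eq, rhs_eq]
    exact mid
  -- E1 : decomposition of condMI Q
  have E1 : condMI Q
      = (∑ a, ∑ y : Fin n → Bool, ∑ c, Q a y c * ∑ i, Real.log (W i (φ i a) (ψ i c) (y i)))
        + ∑ y : Fin n → Bool, ∑ c, (∑ a, Q a y c) *
            Real.log ((∑ a, P a c) / (∑ a, Q a y c)) := by
    rw [condMI_decomp Q hQ0]
    congr 1
    · refine Finset.sum_congr rfl fun a _ => Finset.sum_congr rfl fun y _ =>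
        Finset.sum_congr rfl fun c _ => ?_
      rw [mAC]
      rcases eq_or_lt_of_le (hQ0 a y c) with h | h
      · rw [← h]; ring
      · obtain ⟨hPac, hWpos⟩ := posQ a y c h
        have hqp : Q a y c / P a c = ∏ i, W i (φ i a) (ψ i c) (y i) := by
          rw [hQ, mul_comm, mul_div_assoc, div_self (ne_of_gt hPac), mul_one]
        rw [hqp, Real.log_prod (fun i _ => ne_of_gt (hWpos i))]
    · calc ∑ a, ∑ y : Fin n → Bool, ∑ c, Q a y c *
            Real.log ((∑ a', ∑ y', Q a' y' c) / (∑ a', Q a' y c))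
          = ∑ a, ∑ y : Fin n → Bool, ∑ c, Q a y c *
            Real.log ((∑ a', P a' c) / (∑ a', Q a' y c)) := by
            simp only [mC]
        _ = ∑ y : Fin n → Bool, ∑ a, ∑ c, Q a y c *
            Real.log ((∑ a', P a' c) / (∑ a', Q a' y c)) := Finset.sum_comm
        _ = ∑ y : Fin n → Bool, ∑ c, ∑ a, Q a y c *
            Real.log ((∑ a', P a' c) / (∑ a', Q a' y c)) :=
            Finset.sum_congr rfl fun y _ => Finset.sum_comm
        _ = ∑ y : Fin n → Bool, ∑ c, (∑ a, Q a y c) *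
            Real.log ((∑ a, P a c) / (∑ a, Q a y c)) :=
            Finset.sum_congr rfl fun y _ => Finset.sum_congr rfl fun c _ =>
              (Finset.sum_mul _ _ _).symm
  -- E2 : decomposition of condMI (qi i)
  have mB : ∀ (i : Fin n) (a' : A') (c' : C'), (∑ b, M i a' c' * W i a' c' b) = M i a' c' :=
    fun i a' c' => by rw [← Finset.mul_sum, hW1, mul_one]
  have E2 : ∀ i : Fin n, condMI (fun a' b c' => M i a' c' * W i a' c' b)
      = (∑ a', ∑ b, ∑ c', (M i a' c' * W i a' c' b) * Real.log (W i a' c' b))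
        + ∑ b, ∑ c', (∑ a', M i a' c' * W i a' c' b) *
            Real.log ((∑ a', M i a' c') / (∑ a', M i a' c' * W i a' c' b)) := by
    intro i
    rw [condMI_decomp _ (fun a' b c' => hqi0 i a' b c')]
    congr 1
    · refine Finset.sum_congr rfl fun a' _ => Finset.sum_congr rfl fun b _ =>
        Finset.sum_congr rfl fun c' _ => ?_
      rw [mB]
      rcases eq_or_lt_of_le (hqi0 i a' b c') with h | h
      · rw [← h]; ring
      · have hMpos : 0 < M i a' c' := by
          rcases eq_or_lt_of_le (hM0 i a' c') with h0 | h0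
          · rw [← h0, zero_mul] at h; exact absurd h (lt_irrefl 0)
          · exact h0
        have hqw : M i a' c' * W i a' c' b / M i a' c' = W i a' c' b := by
          rw [mul_comm, mul_div_assoc, div_self (ne_of_gt hMpos), mul_one]
        rw [hqw]
    · calc ∑ a', ∑ b, ∑ c', (M i a' c' * W i a' c' b) *
            Real.log ((∑ a'', ∑ b', M i a'' c' * W i a'' c' b') / (∑ a'', M i a'' c' * W i a'' c' b))
          = ∑ a', ∑ b, ∑ c', (M i a' c' * W i a' c' b) *
            Real.log ((∑ a'', M i a'' c') / (∑ a'', M i a'' c' * W i a'' c' b)) := by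
            simp only [mB]
        _ = ∑ b, ∑ a', ∑ c', (M i a' c' * W i a' c' b) *
            Real.log ((∑ a'', M i a'' c') / (∑ a'', M i a'' c' * W i a'' c' b)) := Finset.sum_comm
        _ = ∑ b, ∑ c', ∑ a', (M i a' c' * W i a' c' b) *
            Real.log ((∑ a'', M i a'' c') / (∑ a'', M i a'' c' * W i a'' c' b)) :=
            Finset.sum_congr rfl fun b _ => Finset.sum_comm
        _ = ∑ b, ∑ c', (∑ a', M i a' c' * W i a' c' b) *
            Real.log ((∑ a', M i a' c') / (∑ a', M i a' c' * W i a' c' b)) :=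
            Finset.sum_congr rfl fun b _ => Finset.sum_congr rfl fun c' _ =>
              (Finset.sum_mul _ _ _).symm
  -- E3 : first terms match
  have E3l : (∑ a, ∑ y : Fin n → Bool, ∑ c, Q a y c * ∑ i, Real.log (W i (φ i a) (ψ i c) (y i)))
      = ∑ i, ∑ a, ∑ c, P a c * ∑ b, W i (φ i a) (ψ i c) b * Real.log (W i (φ i a) (ψ i c) b) := by
    calc ∑ a, ∑ y : Fin n → Bool, ∑ c, Q a y c * ∑ i, Real.log (W i (φ i a) (ψ i c) (y i))
        = ∑ a, ∑ y : Fin n → Bool, ∑ c, ∑ i, Q a y c * Real.log (W i (φ i a) (ψ i c) (y i)) :=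
          Finset.sum_congr rfl fun a _ => Finset.sum_congr rfl fun y _ =>
            Finset.sum_congr rfl fun c _ => Finset.mul_sum _ _ _
      _ = ∑ a, ∑ y : Fin n → Bool, ∑ i, ∑ c, Q a y c * Real.log (W i (φ i a) (ψ i c) (y i)) :=
          Finset.sum_congr rfl fun a _ => Finset.sum_congr rfl fun y _ => Finset.sum_comm
      _ = ∑ a, ∑ i, ∑ y : Fin n → Bool, ∑ c, Q a y c * Real.log (W i (φ i a) (ψ i c) (y i)) :=
          Finset.sum_congr rfl fun a _ => Finset.sum_comm
      _ = ∑ i, ∑ a, ∑ y : Fin n → Bool, ∑ c, Q a y c * Real.log (W i (φ i a) (ψ i c) (y i)) :=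
          Finset.sum_comm
      _ = ∑ i, ∑ a, ∑ c, ∑ y : Fin n → Bool, Q a y c * Real.log (W i (φ i a) (ψ i c) (y i)) :=
          Finset.sum_congr rfl fun i _ => Finset.sum_congr rfl fun a _ => Finset.sum_comm
      _ = ∑ i, ∑ a, ∑ c, P a c * ∑ b, W i (φ i a) (ψ i c) b * Real.log (W i (φ i a) (ψ i c) b) := by
          refine Finset.sum_congr rfl fun i _ => Finset.sum_congr rfl fun a _ =>
            Finset.sum_congr rfl fun c _ => ?_
          simp only [hQ, mul_assoc]
          rw [← Finset.mul_sum]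
          congr 1
          exact sum_prod_eval (fun j b => W j (φ j a) (ψ j c) b) (fun j => hW1 j _ _) i
            (fun b => Real.log (W i (φ i a) (ψ i c) b))
  have E3r : ∀ i : Fin n,
      (∑ a', ∑ b, ∑ c', (M i a' c' * W i a' c' b) * Real.log (W i a' c' b))
      = ∑ a, ∑ c, P a c * ∑ b, W i (φ i a) (ψ i c) b * Real.log (W i (φ i a) (ψ i c) b) := by
    intro i
    have mid := grouping P (φ i) (ψ i)
      (fun a' c' => ∑ b, W i a' c' b * Real.log (W i a' c' b))
    simp only [← hM i] at mid
    calc ∑ a', ∑ b, ∑ c', (M i a' c' * W i a' c' b) * Real.log (W i a' c' b)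
        = ∑ a', ∑ c', ∑ b, (M i a' c' * W i a' c' b) * Real.log (W i a' c' b) :=
          Finset.sum_congr rfl fun a' _ => Finset.sum_comm
      _ = ∑ a', ∑ c', M i a' c' * ∑ b, W i a' c' b * Real.log (W i a' c' b) := by
          refine Finset.sum_congr rfl fun a' _ => Finset.sum_congr rfl fun c' _ => ?_
          rw [Finset.mul_sum]
          exact Finset.sum_congr rfl fun b _ => (mul_assoc _ _ _)
      _ = ∑ a, ∑ c, P a c * ∑ b, W i (φ i a) (ψ i c) b * Real.log (W i (φ i a) (ψ i c) b) := mid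
  -- E4 : second terms of E2 pushed forward
  have E4 : ∀ i : Fin n,
      (∑ b, ∑ c', (∑ a', M i a' c' * W i a' c' b) *
          Real.log ((∑ a', M i a' c') / (∑ a', M i a' c' * W i a' c' b)))
      = ∑ y : Fin n → Bool, ∑ c, (∑ a, Q a y c) *
          (- Real.log ((∑ a', M i a' (ψ i c) * W i a' (ψ i c) (y i)) / (∑ a', M i a' (ψ i c)))) := by
    intro i
    calc (∑ b, ∑ c', (∑ a', M i a' c' * W i a' c' b) *
          Real.log ((∑ a', M i a' c') / (∑ a', M i a' c' * W i a' c' b)))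
        = ∑ b, ∑ c', (∑ a', M i a' c' * W i a' c' b) *
          (- Real.log ((∑ a', M i a' c' * W i a' c' b) / (∑ a', M i a' c'))) := by
          refine Finset.sum_congr rfl fun b _ => Finset.sum_congr rfl fun c' _ => ?_
          rw [← Real.log_inv, inv_div]
      _ = _ := push i (fun b c' =>
          - Real.log ((∑ a', M i a' c' * W i a' c' b) / (∑ a', M i a' c')))
  -- key positivity
  have hkey : ∀ (y : Fin n → Bool) (c : C), 0 < ∑ a, Q a y c →
      (0 < ∑ a, P a c) ∧ ∀ i : Fin n,
        0 < (∑ a', M i a' (ψ i c) * W i a' (ψ i c) (y i)) / (∑ a', M i a' (ψ i c)) := by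
    intro y c hQb
    have hPc : 0 < ∑ a, P a c :=
      lt_of_lt_of_le hQb (Finset.sum_le_sum fun a _ => hQleP a y c)
    obtain ⟨a, ha⟩ : ∃ a, 0 < Q a y c := by
      by_contra hcon
      push_neg at hcon
      have hz : ∑ a, Q a y c = 0 := le_antisymm (Finset.sum_nonpos fun a _ => hcon a)
        (Finset.sum_nonneg fun a _ => hQ0 a y c)
      rw [hz] at hQb; exact lt_irrefl 0 hQb
    obtain ⟨hPac, hWpos⟩ := posQ a y c ha
    refine ⟨hPc, fun i => ?_⟩
    have hQB : 0 < ∑ a', M i a' (ψ i c) * W i a' (ψ i c) (y i) := by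
      have h1 : 0 < M i (φ i a) (ψ i c) * W i (φ i a) (ψ i c) (y i) :=
        mul_pos (lt_of_lt_of_le hPac (hPleM i a c)) (hWpos i)
      exact lt_of_lt_of_le h1 (Finset.single_le_sum
        (f := fun a' => M i a' (ψ i c) * W i a' (ψ i c) (y i))
        (fun a' _ => hqi0 i a' (y i) (ψ i c)) (Finset.mem_univ (φ i a)))
    have hPC : 0 < ∑ a', M i a' (ψ i c) :=
      lt_of_lt_of_le hQB (Finset.sum_le_sum fun a' _ =>
        mul_le_of_le_one_right (hM0 i a' (ψ i c)) (hWle i a' (ψ i c) (y i)))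
    exact div_pos hQB hPC
  -- E5 : the KL inequality
  have E5 : (∑ y : Fin n → Bool, ∑ c, (∑ a, Q a y c) *
        Real.log ((∑ a, P a c) / (∑ a, Q a y c)))
      ≤ ∑ i, ∑ y : Fin n → Bool, ∑ c, (∑ a, Q a y c) *
          (- Real.log ((∑ a', M i a' (ψ i c) * W i a' (ψ i c) (y i)) / (∑ a', M i a' (ψ i c)))) := by
    have swap : (∑ i, ∑ y : Fin n → Bool, ∑ c, (∑ a, Q a y c) *
          (- Real.log ((∑ a', M i a' (ψ i c) * W i a' (ψ i c) (y i)) / (∑ a', M i a' (ψ i c)))))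
        = ∑ y : Fin n → Bool, ∑ c, (∑ a, Q a y c) *
          (- ∑ i, Real.log ((∑ a', M i a' (ψ i c) * W i a' (ψ i c) (y i)) / (∑ a', M i a' (ψ i c)))) := by
      rw [Finset.sum_comm]
      refine Finset.sum_congr rfl fun y _ => ?_
      rw [Finset.sum_comm]
      refine Finset.sum_congr rfl fun c _ => ?_
      rw [← Finset.mul_sum]
      congr 1
      rw [Finset.sum_neg_distrib]
    rw [swap]
    have hterm : ∀ (y : Fin n → Bool) (c : C),
        (∑ a, Q a y c) * (- ∑ i, Real.log ((∑ a', M i a' (ψ i c) * W i a' (ψ i c) (y i)) / (∑ a', M i a' (ψ i c))))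
          - (∑ a, Q a y c) * Real.log ((∑ a, P a c) / (∑ a, Q a y c))
        = (∑ a, Q a y c) * Real.log ((∑ a, Q a y c)
            / ((∑ a, P a c) * ∏ i, (∑ a', M i a' (ψ i c) * W i a' (ψ i c) (y i)) / (∑ a', M i a' (ψ i c)))) := by
      intro y c
      rcases eq_or_lt_of_le (Finset.sum_nonneg fun a (_ : a ∈ Finset.univ) => hQ0 a y c) with h | h
      · rw [← h]; ring
      · obtain ⟨hPc, hr⟩ := hkey y c h
        have hprod : 0 < ∏ i, (∑ a', M i a' (ψ i c) * W i a' (ψ i c) (y i)) / (∑ a', M i a' (ψ i c)) :=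
          Finset.prod_pos fun i _ => hr i
        rw [Real.log_div (ne_of_gt h) (ne_of_gt (mul_pos hPc hprod)),
          Real.log_mul (ne_of_gt hPc) (ne_of_gt hprod),
          Real.log_prod (fun i _ => ne_of_gt (hr i)),
          Real.log_div (ne_of_gt hPc) (ne_of_gt h)]
        ring
    have hfg : ∀ x : (Fin n → Bool) × C,
        ((∑ a, P a x.2) * ∏ i, (∑ a', M i a' (ψ i x.2) * W i a' (ψ i x.2) (x.1 i)) / (∑ a', M i a' (ψ i x.2))) = 0
        → (∑ a, Q a x.1 x.2) = 0 := by
      intro x hx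
      by_contra hne
      have hpos : 0 < ∑ a, Q a x.1 x.2 :=
        lt_of_le_of_ne (Finset.sum_nonneg fun a _ => hQ0 a x.1 x.2) (Ne.symm hne)
      obtain ⟨hPc, hr⟩ := hkey x.1 x.2 hpos
      have hgpos : 0 < (∑ a, P a x.2) *
          ∏ i, (∑ a', M i a' (ψ i x.2) * W i a' (ψ i x.2) (x.1 i)) / (∑ a', M i a' (ψ i x.2)) :=
        mul_pos hPc (Finset.prod_pos fun i _ => hr i)
      rw [hx] at hgpos; exact lt_irrefl 0 hgpos
    have hsum1 : ∀ c : C, (∑ y : Fin n → Bool,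
        ∏ i, (∑ a', M i a' (ψ i c) * W i a' (ψ i c) (y i)) / (∑ a', M i a' (ψ i c))) ≤ 1 := by
      intro c
      have heq : (∑ y : Fin n → Bool,
          ∏ i, (∑ a', M i a' (ψ i c) * W i a' (ψ i c) (y i)) / (∑ a', M i a' (ψ i c)))
          = ∏ i, ∑ b, (∑ a', M i a' (ψ i c) * W i a' (ψ i c) b) / (∑ a', M i a' (ψ i c)) := by
        have hps := Finset.prod_univ_sum (fun _ : Fin n => (Finset.univ : Finset Bool))
          (fun i b => (∑ a', M i a' (ψ i c) * W i a' (ψ i c) b) / (∑ a', M i a' (ψ i c)))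
        rw [Fintype.piFinset_univ] at hps
        exact hps.symm
      rw [heq]
      refine Finset.prod_le_one (fun i _ => Finset.sum_nonneg fun b _ =>
        div_nonneg (Finset.sum_nonneg fun a' _ => hqi0 i a' b (ψ i c))
          (Finset.sum_nonneg fun a' _ => hM0 i a' (ψ i c))) (fun i _ => ?_)
      rw [← Finset.sum_div]
      have hnum : (∑ b, ∑ a', M i a' (ψ i c) * W i a' (ψ i c) b) = ∑ a', M i a' (ψ i c) := by
        rw [Finset.sum_comm]
        exact Finset.sum_congr rfl fun a' _ => mB i a' (ψ i c)
      rw [hnum]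
      rcases eq_or_lt_of_le (Finset.sum_nonneg fun a' (_ : a' ∈ Finset.univ) => hM0 i a' (ψ i c)) with h0 | h0
      · rw [← h0]; simp
      · rw [div_self (ne_of_gt h0)]
    have hsum : (∑ x : (Fin n → Bool) × C, ((∑ a, P a x.2) *
          ∏ i, (∑ a', M i a' (ψ i x.2) * W i a' (ψ i x.2) (x.1 i)) / (∑ a', M i a' (ψ i x.2))))
        ≤ ∑ x : (Fin n → Bool) × C, (∑ a, Q a x.1 x.2) := by
      rw [Fintype.sum_prod_type, Fintype.sum_prod_type]
      calc (∑ y : Fin n → Bool, ∑ c, ((∑ a, P a c) *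
            ∏ i, (∑ a', M i a' (ψ i c) * W i a' (ψ i c) (y i)) / (∑ a', M i a' (ψ i c))))
          = ∑ c, ∑ y : Fin n → Bool, ((∑ a, P a c) *
            ∏ i, (∑ a', M i a' (ψ i c) * W i a' (ψ i c) (y i)) / (∑ a', M i a' (ψ i c))) :=
            Finset.sum_comm
        _ ≤ ∑ c, ∑ a, P a c := by
            refine Finset.sum_le_sum fun c _ => ?_
            rw [← Finset.mul_sum]
            exact mul_le_of_le_one_right (Finset.sum_nonneg fun a _ => hP a c) (hsum1 c)
        _ = ∑ c, ∑ y : Fin n → Bool, ∑ a, Q a y c := by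
            refine Finset.sum_congr rfl fun c _ => ?_
            calc ∑ a, P a c = ∑ a, ∑ y : Fin n → Bool, Q a y c :=
                  Finset.sum_congr rfl fun a _ => (mAC a c).symm
              _ = ∑ y : Fin n → Bool, ∑ a, Q a y c := Finset.sum_comm
        _ = ∑ y : Fin n → Bool, ∑ c, ∑ a, Q a y c := Finset.sum_comm
    have hkl := klLemma (ι := (Fin n → Bool) × C)
      (fun x => ∑ a, Q a x.1 x.2)
      (fun x => (∑ a, P a x.2) *
        ∏ i, (∑ a', M i a' (ψ i x.2) * W i a' (ψ i x.2) (x.1 i)) / (∑ a', M i a' (ψ i x.2)))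
      (fun x => Finset.sum_nonneg fun a _ => hQ0 a x.1 x.2)
      (fun x => mul_nonneg (Finset.sum_nonneg fun a _ => hP a x.2)
        (Finset.prod_nonneg fun i _ => div_nonneg
          (Finset.sum_nonneg fun a' _ => hqi0 i a' (x.1 i) (ψ i x.2))
          (Finset.sum_nonneg fun a' _ => hM0 i a' (ψ i x.2))))
      hfg hsum
    rw [Fintype.sum_prod_type] at hkl
    have final : (0:ℝ) ≤ ∑ y : Fin n → Bool, ∑ c, (∑ a, Q a y c) *
        Real.log ((∑ a, Q a y c)
          / ((∑ a, P a c) * ∏ i, (∑ a', M i a' (ψ i c) * W i a' (ψ i c) (y i)) / (∑ a', M i a' (ψ i c)))) := hkl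
    have hTS : (∑ y : Fin n → Bool, ∑ c, (∑ a, Q a y c) *
          (- ∑ i, Real.log ((∑ a', M i a' (ψ i c) * W i a' (ψ i c) (y i)) / (∑ a', M i a' (ψ i c)))))
        - (∑ y : Fin n → Bool, ∑ c, (∑ a, Q a y c) *
          Real.log ((∑ a, P a c) / (∑ a, Q a y c)))
        = ∑ y : Fin n → Bool, ∑ c, (∑ a, Q a y c) *
        Real.log ((∑ a, Q a y c)
          / ((∑ a, P a c) * ∏ i, (∑ a', M i a' (ψ i c) * W i a' (ψ i c) (y i)) / (∑ a', M i a' (ψ i c)))) := by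
      rw [← Finset.sum_sub_distrib]
      refine Finset.sum_congr rfl fun y _ => ?_
      rw [← Finset.sum_sub_distrib]
      exact Finset.sum_congr rfl fun c _ => hterm y c
    linarith
  -- assemble
  rw [E1]
  have hsum2 : (∑ i, condMI (fun a' b c' => M i a' c' * W i a' c' b))
      = (∑ i, ∑ a', ∑ b, ∑ c', (M i a' c' * W i a' c' b) * Real.log (W i a' c' b))
        + ∑ i, ∑ b, ∑ c', (∑ a', M i a' c' * W i a' c' b) *
            Real.log ((∑ a', M i a' c') / (∑ a', M i a' c' * W i a' c' b)) := by
    rw [← Finset.sum_add_distrib]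
    exact Finset.sum_congr rfl fun i _ => E2 i
  rw [hsum2]
  have hfirst : (∑ a, ∑ y : Fin n → Bool, ∑ c, Q a y c * ∑ i, Real.log (W i (φ i a) (ψ i c) (y i)))
      = ∑ i, ∑ a', ∑ b, ∑ c', (M i a' c' * W i a' c' b) * Real.log (W i a' c' b) :=
    E3l.trans (Finset.sum_congr rfl fun i _ => (E3r i).symm)
  have hsecond : (∑ y : Fin n → Bool, ∑ c, (∑ a, Q a y c) *
        Real.log ((∑ a, P a c) / (∑ a, Q a y c)))
      ≤ ∑ i, ∑ b, ∑ c', (∑ a', M i a' c' * W i a' c' b) *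
          Real.log ((∑ a', M i a' c') / (∑ a', M i a' c' * W i a' c' b)) := by
    calc (∑ y : Fin n → Bool, ∑ c, (∑ a, Q a y c) *
          Real.log ((∑ a, P a c) / (∑ a, Q a y c)))
        ≤ ∑ i, ∑ y : Fin n → Bool, ∑ c, (∑ a, Q a y c) *
          (- Real.log ((∑ a', M i a' (ψ i c) * W i a' (ψ i c) (y i)) / (∑ a', M i a' (ψ i c)))) := E5
      _ = _ := Finset.sum_congr rfl fun i _ => (E4 i).symm
  linarith

/- STATEMENT 13: I(S_dif; Y | S_eq) ≤ ∑_{i=1}^n I(V_dif^(i); Y^(i) | V_eq^(i)). -/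
theorem genie_mutual_info_single_letter_bound
    (p k ℓ n : ℕ) (hl1 : 1 ≤ ℓ) (hlk : ℓ ≤ k) (hkp : k ≤ p)
    (X : Fin n → Fin p → Bool)
    (W : Fin n → ℕ → ℕ → Bool → ℝ)
    (hW0 : ∀ i a c y, 0 ≤ W i a c y) (hW1 : ∀ i a c, ∑ y, W i a c y = 1) :
    condMI (genieJoint p k ℓ n X W)
      ≤ ∑ i, condMI (genieJointI p k ℓ n X W i) := by
  have hcard : ∀ (i : Fin n) (s : Finset (Fin p)),
      (s.filter fun j => X i j = true).card < p + 1 := by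
    intro i s
    have h1 : (s.filter fun j => X i j = true).card ≤ s.card := Finset.card_filter_le _ _
    have h2 : s.card ≤ p := le_trans (Finset.card_le_univ s) (by simp)
    omega
  let φ : Fin n → Finset (Fin p) → Fin (p + 1) :=
    fun i s => ⟨(s.filter fun j => X i j = true).card, hcard i s⟩
  have hP0 : ∀ sd se : Finset (Fin p), 0 ≤ genieP p k ℓ sd se := by
    intro sd se
    unfold genieP
    split
    · positivity
    · exact le_rfl
  have key := main_aux (genieP p k ℓ) hP0 φ φ
    (fun i a c b => W i (a : ℕ) (c : ℕ) b)
    (fun i a c b => hW0 i _ _ b) (fun i a c => hW1 i _ _)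
    (genieJoint p k ℓ n X W) (fun sd y se => rfl)
    (fun i a c => (∑ sd : Finset (Fin p), ∑ se : Finset (Fin p),
      if (sd.filter fun j => X i j = true).card = (a : ℕ)
          ∧ (se.filter fun j => X i j = true).card = (c : ℕ) then
        genieP p k ℓ sd se
      else 0))
    ?_
  · exact key
  · intro i a' c'
    refine Finset.sum_congr rfl fun sd _ => Finset.sum_congr rfl fun se _ => ?_
    refine if_congr ?_ rfl rfl
    constructor
    · rintro ⟨h1, h2⟩
      exact ⟨Fin.ext h1, Fin.ext h2⟩
    · rintro ⟨h1, h2⟩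
      exact ⟨congrArg Fin.val h1, congrArg Fin.val h2⟩
end
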